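/- arXiv:1906.12156 — 4 statements merged into one kernel-verified Lean document; each statement's English description precedes it below -/
import Mathlib

section
/- For all a > 0 and p > 0, the improper integral ∫_0^∞ t^{-3/2} e^{-a/t − p·t} dt converges and equals √(π/a) · e^{-2√(a·p)}. -/
open Real MeasureTheory Set

lemma image_sub_inv : (fun x : ℝ => x - x⁻¹) '' Ioi 0 = univ := by
  ext y
  simp only [mem_image, mem_Ioi, mem_univ, iff_true]
  set s := Real.sqrt (y^2 + 4) with hs
  have hs2 : s^2 = y^2 + 4 := Real.sq_sqrt (by positivity)
  have hspos : 0 < s := Real.sqrt_pos.mpr (by positivity)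
  refine ⟨(y + s)/2, ?_, ?_⟩
  · nlinarith [sq_nonneg (y + s)]
  · have hx : (0:ℝ) < (y + s)/2 := by nlinarith [sq_nonneg (y + s)]
    have hne : y + s ≠ 0 := ne_of_gt (by linarith)
    field_simp
    nlinarith

lemma injOn_sub_inv : InjOn (fun x : ℝ => x - x⁻¹) (Ioi 0) := by
  intro x hx y hy h
  simp only [mem_Ioi] at hx hy
  have h' : x - x⁻¹ = y - y⁻¹ := h
  field_simp at h'
  nlinarith [mul_pos hx hy]

lemma glasser (c : ℝ) (hc : 0 < c) :
    IntegrableOn (fun x : ℝ => (1 + (x^2)⁻¹) * Real.exp (-c * (x - x⁻¹)^2)) (Ioi 0) ∧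
    ∫ x in Ioi (0:ℝ), (1 + (x^2)⁻¹) * Real.exp (-c * (x - x⁻¹)^2) = Real.sqrt (π / c) := by
  have hderiv : ∀ x ∈ Ioi (0:ℝ), HasDerivWithinAt (fun x : ℝ => x - x⁻¹)
      (1 + (x^2)⁻¹) (Ioi 0) x := by
    intro x hx
    have : HasDerivAt (fun x : ℝ => x - x⁻¹) (1 - -(x^2)⁻¹) x :=
      (hasDerivAt_id x).sub (hasDerivAt_inv (ne_of_gt hx))
    simpa [sub_neg_eq_add] using this.hasDerivWithinAt
  have key := integral_image_eq_integral_abs_deriv_smul measurableSet_Ioi hderiv injOn_sub_inv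
    (fun y => Real.exp (-c * y^2))
  have keyI := integrableOn_image_iff_integrableOn_abs_deriv_smul measurableSet_Ioi hderiv
    injOn_sub_inv (fun y => Real.exp (-c * y^2))
  rw [image_sub_inv] at key keyI
  have hcongr : EqOn (fun x : ℝ => |1 + (x^2)⁻¹| • Real.exp (-c * (x - x⁻¹)^2))
      (fun x : ℝ => (1 + (x^2)⁻¹) * Real.exp (-c * (x - x⁻¹)^2)) (Ioi 0) := by
    intro x hx
    simp only [smul_eq_mul]
    rw [abs_of_pos (by positivity)]
  constructor
  · exact ((keyI.mp ((integrable_exp_neg_mul_sq hc).integrableOn)).congr_fun hcongr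
      measurableSet_Ioi)
  · rw [← setIntegral_congr_fun measurableSet_Ioi hcongr, ← key]
    rw [Measure.restrict_univ]
    exact integral_gaussian c

lemma image_inv_Ioi : (fun x : ℝ => x⁻¹) '' Ioi 0 = Ioi 0 := by
  ext y
  simp only [mem_image, mem_Ioi]
  constructor
  · rintro ⟨x, hx, rfl⟩; positivity
  · intro hy; exact ⟨y⁻¹, by positivity, inv_inv y⟩

lemma qlem (c : ℝ) (hc : 0 < c) :
    IntegrableOn (fun x : ℝ => Real.exp (-c * (x^2 + (x⁻¹)^2))) (Ioi 0) ∧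
    IntegrableOn (fun x : ℝ => (x^2)⁻¹ * Real.exp (-c * (x^2 + (x⁻¹)^2))) (Ioi 0) ∧
    ∫ x in Ioi (0:ℝ), (x^2)⁻¹ * Real.exp (-c * (x^2 + (x⁻¹)^2))
      = ∫ x in Ioi (0:ℝ), Real.exp (-c * (x^2 + (x⁻¹)^2)) := by
  set q : ℝ → ℝ := fun x => Real.exp (-c * (x^2 + (x⁻¹)^2)) with hq
  have hqI : IntegrableOn q (Ioi 0) := by
    refine Integrable.mono' ((integrable_exp_neg_mul_sq hc).integrableOn)
      ?_ (Filter.Eventually.of_forall fun x => ?_)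
    · have : Measurable q := by measurability
      exact this.aestronglyMeasurable
    · have : -c * (x^2 + (x⁻¹)^2) ≤ -c * x^2 := by nlinarith [sq_nonneg x⁻¹]
      simpa [q, abs_of_pos (Real.exp_pos _)] using Real.exp_le_exp.2 this
  have hderiv : ∀ x ∈ Ioi (0:ℝ), HasDerivWithinAt (fun x : ℝ => x⁻¹)
      (-(x^2)⁻¹) (Ioi 0) x := fun x hx =>
    (hasDerivAt_inv (ne_of_gt hx)).hasDerivWithinAt
  have hinj : InjOn (fun x : ℝ => x⁻¹) (Ioi 0) := inv_injective.injOn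
  have key := integral_image_eq_integral_abs_deriv_smul measurableSet_Ioi hderiv hinj q
  have keyI := integrableOn_image_iff_integrableOn_abs_deriv_smul measurableSet_Ioi hderiv hinj q
  rw [image_inv_Ioi] at key keyI
  have hqinv : ∀ x : ℝ, q x⁻¹ = q x := by
    intro x; simp only [q, inv_inv]; ring_nf
  have hcongr : EqOn (fun x : ℝ => |(-(x^2)⁻¹)| • q x⁻¹)
      (fun x : ℝ => (x^2)⁻¹ * q x) (Ioi 0) := by
    intro x hx
    simp only [smul_eq_mul, hqinv, abs_neg, abs_inv, sq_abs, abs_sq]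
  refine ⟨hqI, ?_, ?_⟩
  · exact (keyI.mp hqI).congr_fun hcongr measurableSet_Ioi
  · rw [← setIntegral_congr_fun measurableSet_Ioi hcongr, ← key]



lemma Jval (c : ℝ) (hc : 0 < c) :
    ∫ x in Ioi (0:ℝ), (x^2)⁻¹ * Real.exp (-c * (x^2 + (x⁻¹)^2))
      = Real.exp (-2*c) * Real.sqrt (π / c) / 2 := by
  obtain ⟨hq1, hq2, hq3⟩ := qlem c hc
  obtain ⟨hg1, hg2⟩ := glasser c hc
  have hpt : EqOn (fun x : ℝ => (1 + (x^2)⁻¹) * Real.exp (-c * (x - x⁻¹)^2))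
      (fun x : ℝ => Real.exp (2*c) * ((1 + (x^2)⁻¹) * Real.exp (-c * (x^2 + (x⁻¹)^2))))
      (Ioi 0) := by
    intro x hx
    have hx0 : x ≠ 0 := ne_of_gt hx
    simp only
    rw [mul_comm (Real.exp (2*c)), mul_assoc, ← Real.exp_add]
    congr 2
    field_simp
    ring
  have h2 : Real.sqrt (π / c)
      = Real.exp (2*c) * (2 * ∫ x in Ioi (0:ℝ), (x^2)⁻¹ * Real.exp (-c * (x^2 + (x⁻¹)^2))) := by
    rw [← hg2, setIntegral_congr_fun measurableSet_Ioi hpt, integral_const_mul]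
    congr 1
    have : ∀ x : ℝ, (1 + (x^2)⁻¹) * Real.exp (-c * (x^2 + (x⁻¹)^2))
        = Real.exp (-c * (x^2 + (x⁻¹)^2)) + (x^2)⁻¹ * Real.exp (-c * (x^2 + (x⁻¹)^2)) := by
      intro x; ring
    simp_rw [this]
    rw [integral_add hq1 hq2, hq3]
    ring
  have he : Real.exp (2*c) ≠ 0 := Real.exp_ne_zero _
  rw [h2, neg_mul, Real.exp_neg]
  field_simp




/-- Laplace-transform identity: for `a > 0` and `p > 0`,
`∫_0^∞ t^(-3/2) e^(-a/t - p·t) dt` converges and equals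
`√(π/a) · e^(-2√(a·p))`. -/
theorem integral_rpow_neg_three_halves_exp_laplace (a p : ℝ)
    (ha : 0 < a) (hp : 0 < p) :
    IntegrableOn (fun t : ℝ => t ^ (-(3 : ℝ) / 2) * Real.exp (-a / t - p * t))
      (Ioi (0 : ℝ)) ∧
    ∫ t in Ioi (0 : ℝ), t ^ (-(3 : ℝ) / 2) * Real.exp (-a / t - p * t)
      = Real.sqrt (π / a) * Real.exp (-2 * Real.sqrt (a * p)) := by
  set b : ℝ := Real.sqrt a / Real.sqrt p with hbdef
  set c : ℝ := Real.sqrt a * Real.sqrt p with hcdef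
  have hsa : Real.sqrt a ^ 2 = a := Real.sq_sqrt ha.le
  have hsp : Real.sqrt p ^ 2 = p := Real.sq_sqrt hp.le
  have hsa0 : 0 < Real.sqrt a := Real.sqrt_pos.mpr ha
  have hsp0 : 0 < Real.sqrt p := Real.sqrt_pos.mpr hp
  have hb : 0 < b := div_pos hsa0 hsp0
  have hc : 0 < c := mul_pos hsa0 hsp0
  have hcb : c * b = a := by
    rw [hbdef, hcdef]; field_simp; linear_combination hsa
  have hab : a / b = c := by
    rw [hbdef, hcdef]; field_simp; linear_combination (-(1:ℝ)) * hsa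
  have hpb : p * b = c := by
    rw [hbdef, hcdef]; field_simp; linear_combination (-(1:ℝ)) * hsp
  have himg : (fun x : ℝ => b * x^2) '' Ioi 0 = Ioi 0 := by
    ext y
    simp only [mem_image, mem_Ioi]
    constructor
    · rintro ⟨x, hx, rfl⟩; positivity
    · intro hy
      refine ⟨Real.sqrt (y / b), Real.sqrt_pos.mpr (by positivity), ?_⟩
      rw [sq, Real.mul_self_sqrt (by positivity)]
      field_simp
  have hderiv : ∀ x ∈ Ioi (0:ℝ), HasDerivWithinAt (fun x : ℝ => b * x^2)
      (b * (2 * x)) (Ioi 0) x := by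
    intro x hx
    exact ((hasDerivAt_pow 2 x).const_mul b).hasDerivWithinAt.congr_deriv (by ring)
  have hinj : InjOn (fun x : ℝ => b * x^2) (Ioi 0) := by
    intro x hx y hy h
    simp only [mem_Ioi] at hx hy
    simp only at h
    have h' : x^2 = y^2 := mul_left_cancel₀ (ne_of_gt hb) h
    nlinarith
  set g : ℝ → ℝ := fun t => t ^ (-(3 : ℝ) / 2) * Real.exp (-a / t - p * t) with hg
  have key := integral_image_eq_integral_abs_deriv_smul measurableSet_Ioi hderiv hinj g
  have keyI := integrableOn_image_iff_integrableOn_abs_deriv_smul measurableSet_Ioi hderiv hinj g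
  rw [himg] at key keyI
  have hcongr : EqOn (fun x : ℝ => |b * (2 * x)| • g (b * x^2))
      (fun x : ℝ => (2 * b ^ (-(1:ℝ)/2)) * ((x^2)⁻¹ * Real.exp (-c * (x^2 + (x⁻¹)^2))))
      (Ioi 0) := by
    intro x hx
    simp only [mem_Ioi] at hx
    have hx0 : x ≠ 0 := ne_of_gt hx
    simp only [smul_eq_mul, hg]
    rw [abs_of_pos (by positivity)]
    have h1 : (b * x^2) ^ (-(3:ℝ)/2) = b ^ (-(3:ℝ)/2) * (x^3)⁻¹ := by
      rw [Real.mul_rpow hb.le (sq_nonneg x)]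
      congr 1
      rw [← Real.rpow_natCast x 2, ← Real.rpow_mul hx.le,
        show ((2:ℕ):ℝ) * (-(3:ℝ)/2) = -(3:ℝ) by norm_num,
        show (-(3:ℝ)) = -((3:ℕ):ℝ) by norm_num,
        Real.rpow_neg hx.le, Real.rpow_natCast]
    have h2 : -a / (b * x^2) - p * (b * x^2) = -c * (x^2 + (x⁻¹)^2) := by
      have e1 : a / (b * x^2) = c * (x⁻¹)^2 := by
        rw [← hab]; field_simp
      have e2 : p * (b * x^2) = c * x^2 := by
        rw [← hpb]; ring
      rw [neg_div, e1, e2]; ring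
    rw [h2, h1]
    have hbb : b * b ^ (-(3:ℝ)/2) = b ^ (-(1:ℝ)/2) := by
      have h := (Real.rpow_add hb 1 (-(3:ℝ)/2)).symm
      rw [Real.rpow_one] at h
      rw [h]; norm_num
    have hx3 : x * (x^3)⁻¹ = (x^2)⁻¹ := by
      field_simp
    calc b * (2*x) * (b ^ (-(3:ℝ)/2) * (x^3)⁻¹ * Real.exp (-c * (x^2 + (x⁻¹)^2)))
        = 2 * (b * b ^ (-(3:ℝ)/2)) * (x * (x^3)⁻¹) * Real.exp (-c * (x^2 + (x⁻¹)^2)) := by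
          ring
      _ = 2 * b ^ (-(1:ℝ)/2) * (x^2)⁻¹ * Real.exp (-c * (x^2 + (x⁻¹)^2)) := by
          rw [hbb, hx3]
      _ = (2 * b ^ (-(1:ℝ)/2)) * ((x^2)⁻¹ * Real.exp (-c * (x^2 + (x⁻¹)^2))) := by
          ring
  constructor
  · have hInt2 : IntegrableOn
        (fun x : ℝ => (2 * b ^ (-(1:ℝ)/2)) * ((x^2)⁻¹ * Real.exp (-c * (x^2 + (x⁻¹)^2))))
        (Ioi 0) := (qlem c hc).2.1.const_mul _
    exact keyI.mpr (hInt2.congr_fun hcongr.symm measurableSet_Ioi)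
  · rw [key, setIntegral_congr_fun measurableSet_Ioi hcongr, integral_const_mul, Jval c hc]
    have hsap : Real.sqrt (a*p) = c := by
      rw [hcdef, ← Real.sqrt_mul ha.le]
    have hbr : b ^ (-(1:ℝ)/2) = (Real.sqrt b)⁻¹ := by
      rw [show (-(1:ℝ)/2) = -(1/2 : ℝ) by norm_num, Real.rpow_neg hb.le, ← Real.sqrt_eq_rpow]
    have hfin : Real.sqrt (π/a) = Real.sqrt (π/c) / Real.sqrt b := by
      rw [← hcb, show π / (c*b) = π/c/b by rw [div_div], Real.sqrt_div (by positivity)]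
    rw [hsap, hbr, hfin]
    field_simp
end

section
/- For all a > 0 and β > 0, the improper integral ∫_0^∞ w^{-3/2} e^{-a/w} cos(β·w) dw converges and equals √(π/a) · e^{-√(2aβ)} · cos(√(2aβ)). (This is the real part of the half-line Fourier transform of f(w) = w^{-3/2} e^{-a/w} at frequency β.) -/
open Real MeasureTheory Set Filter Complex Topology


lemma glasser_surj (k t : ℝ) (hk : 0 < k) :
    ∃ u ∈ Ioi (0:ℝ), u - k/u = t := by
  set s := Real.sqrt (t^2 + 4*k) with hs
  have hs0 : 0 ≤ s := Real.sqrt_nonneg _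
  have hs2 : s^2 = t^2 + 4*k := Real.sq_sqrt (by positivity)
  have hst : |t| < s := by
    nlinarith [abs_nonneg t, _root_.sq_abs t]
  have hu : 0 < (t + s)/2 := by
    have := neg_abs_le t
    nlinarith
  refine ⟨(t+s)/2, hu, ?_⟩
  have hne : (t+s)/2 ≠ 0 := ne_of_gt hu
  have hk' : k = ((t+s)/2)*((t+s)/2) - t*((t+s)/2) := by nlinarith
  have hfac : ((t+s)/2*((t+s)/2) - t*((t+s)/2)) = ((t+s)/2) * ((t+s)/2 - t) := by ring
  rw [hk', hfac, mul_div_cancel_left₀ _ hne]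
  ring

lemma glasser_integrable_aux (k : ℝ) (hk : 0 < k) :
    IntegrableOn (fun u : ℝ => Real.exp (-(u - k/u)^2)) (Ioi 0) ∧
    IntegrableOn (fun u : ℝ => k/u^2 * Real.exp (-(u - k/u)^2)) (Ioi 0) := by
  have hc0 : ContinuousOn (fun u : ℝ => u - k/u) (Ioi 0) :=
    continuousOn_id.sub (continuousOn_const.div continuousOn_id fun x hx => ne_of_gt hx)
  have hcont : ContinuousOn (fun u : ℝ => Real.exp (-(u - k/u)^2)) (Ioi 0) :=
    Real.continuous_exp.comp_continuousOn ((hc0.pow 2).neg)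
  have hgauss : Integrable (fun u : ℝ => Real.exp (2*k) * Real.exp (-u^2)) := by
    have := (integrable_exp_neg_mul_sq (b := 1) one_pos).const_mul (Real.exp (2*k))
    simpa using this
  have hexpand : ∀ u : ℝ, u ∈ Ioi (0:ℝ) →
      (u - k/u)^2 = u^2 - 2*k + (k/u)^2 := by
    intro u hu
    have : (u:ℝ) ≠ 0 := ne_of_gt hu
    field_simp
    ring
  constructor
  · apply Integrable.mono (hgauss.restrict (s := Ioi 0))
      (hcont.aestronglyMeasurable measurableSet_Ioi)
    filter_upwards [ae_restrict_mem measurableSet_Ioi] with u hu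
    rw [Real.norm_eq_abs, _root_.abs_of_nonneg (Real.exp_nonneg _),
      Real.norm_eq_abs, _root_.abs_of_nonneg (by positivity)]
    rw [← Real.exp_add, Real.exp_le_exp, hexpand u hu]
    nlinarith [sq_nonneg (k/u)]
  · have hcont2 : ContinuousOn (fun u : ℝ => k/u^2 * Real.exp (-(u - k/u)^2)) (Ioi 0) :=
      (continuousOn_const.div (continuousOn_id.pow 2)
        (fun x hx => pow_ne_zero 2 (ne_of_gt hx))).mul hcont
    apply Integrable.mono ((hgauss.const_mul (1/k)).restrict (s := Ioi 0))
      (hcont2.aestronglyMeasurable measurableSet_Ioi)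
    filter_upwards [ae_restrict_mem measurableSet_Ioi] with u hu
    have hu0 : (0:ℝ) < u := hu
    rw [Real.norm_eq_abs, _root_.abs_of_nonneg (by positivity),
      Real.norm_eq_abs, _root_.abs_of_nonneg (by positivity)]
    have h1 : Real.exp (-(u - k/u)^2) = Real.exp (2*k) * Real.exp (-u^2) * Real.exp (-(k/u)^2) := by
      rw [← Real.exp_add, ← Real.exp_add]
      congr 1
      rw [hexpand u hu]; ring
    rw [h1]
    have hy : (k/u)^2 * Real.exp (-(k/u)^2) ≤ 1 := by
      have h := Real.add_one_le_exp ((k/u)^2)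
      rw [Real.exp_neg]
      rw [mul_inv_le_iff₀ (Real.exp_pos _), one_mul]
      nlinarith [sq_nonneg (k/u)]
    have : k/u^2 * Real.exp (-(k/u)^2) ≤ 1/k := by
      have hk2 : k/u^2 = (1/k) * (k/u)^2 := by field_simp
      rw [hk2, mul_assoc]
      calc (1/k) * ((k/u)^2 * Real.exp (-(k/u)^2)) ≤ (1/k) * 1 := by
            apply mul_le_mul_of_nonneg_left hy (by positivity)
        _ = 1/k := mul_one _
    calc k/u^2 * (Real.exp (2*k) * Real.exp (-u^2) * Real.exp (-(k/u)^2))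
        = (k/u^2 * Real.exp (-(k/u)^2)) * (Real.exp (2*k) * Real.exp (-u^2)) := by ring
      _ ≤ (1/k) * (Real.exp (2*k) * Real.exp (-u^2)) := by
          apply mul_le_mul_of_nonneg_right this (by positivity)

lemma glasser_s10 (k : ℝ) (hk : 0 < k) :
    ∫ u in Ioi (0:ℝ), Real.exp (-(u - k/u)^2) = Real.sqrt π / 2 := by
  obtain ⟨hI1, hI2⟩ := glasser_integrable_aux k hk
  set φ : ℝ → ℝ := fun u => u - k/u with hφ
  have hderiv : ∀ u ∈ Ioi (0:ℝ), HasDerivWithinAt φ (1 + k/u^2) (Ioi 0) u := by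
    intro u hu
    have hu0 : (u:ℝ) ≠ 0 := ne_of_gt hu
    have h := ((hasDerivAt_id u).sub ((hasDerivAt_inv hu0).const_mul k))
    have : φ = fun u : ℝ => u - k * u⁻¹ := by
      funext v; simp [hφ, div_eq_mul_inv, mul_comm]
    rw [this]
    refine h.hasDerivWithinAt.congr_deriv ?_
    ring
  have hmono : StrictMonoOn φ (Ioi 0) := by
    intro u hu v hv huv
    have hu0 : (0:ℝ) < u := hu
    have hv0 : (0:ℝ) < v := hv
    have : k/v < k/u := by
      apply div_lt_div_of_pos_left hk hu0 huv
    simp only [hφ]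
    linarith
  have hinj : InjOn φ (Ioi 0) := hmono.injOn
  have himage : φ '' Ioi 0 = univ := by
    apply eq_univ_of_forall
    intro t
    obtain ⟨u, hu, hut⟩ := glasser_surj k t hk
    exact ⟨u, hu, hut⟩
  have h1 := integral_image_eq_integral_abs_deriv_smul measurableSet_Ioi hderiv hinj
    (fun t => Real.exp (-t^2))
  rw [himage] at h1
  have hlhs : ∫ t in (univ : Set ℝ), Real.exp (-t^2) = Real.sqrt π := by
    rw [Measure.restrict_univ]
    have := integral_gaussian 1
    simpa using this
  rw [hlhs] at h1
  have hrhs : ∫ u in Ioi (0:ℝ), |1 + k/u^2| • Real.exp (-(φ u)^2)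
      = ∫ u in Ioi (0:ℝ), (Real.exp (-(u - k/u)^2) + k/u^2 * Real.exp (-(u - k/u)^2)) := by
    apply setIntegral_congr_fun measurableSet_Ioi
    intro u hu
    have hu0 : (0:ℝ) < u := hu
    dsimp only
    rw [abs_of_pos (by positivity), smul_eq_mul]
    ring
  rw [hrhs, integral_add hI1 hI2] at h1
  -- symmetry: second integral equals first
  have hsym : ∫ u in Ioi (0:ℝ), k/u^2 * Real.exp (-(u - k/u)^2)
      = ∫ u in Ioi (0:ℝ), Real.exp (-(u - k/u)^2) := by
    set ψ : ℝ → ℝ := fun u => k/u with hψ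
    have hderiv2 : ∀ u ∈ Ioi (0:ℝ), HasDerivWithinAt ψ (-(k/u^2)) (Ioi 0) u := by
      intro u hu
      have hu0 : (u:ℝ) ≠ 0 := ne_of_gt hu
      have h := (hasDerivAt_inv hu0).const_mul k
      have : ψ = fun u : ℝ => k * u⁻¹ := by
        funext v; simp [hψ, div_eq_mul_inv]
      rw [this]
      refine h.hasDerivWithinAt.congr_deriv ?_
      ring
    have hinj2 : InjOn ψ (Ioi 0) := by
      intro u hu v hv h
      have hu0 : (u:ℝ) ≠ 0 := ne_of_gt hu
      have hv0 : (v:ℝ) ≠ 0 := ne_of_gt hv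
      simp only [hψ] at h
      field_simp at h
      linarith
    have himage2 : ψ '' Ioi 0 = Ioi 0 := by
      ext t
      constructor
      · rintro ⟨u, hu, rfl⟩
        exact div_pos hk hu
      · intro ht
        exact ⟨k/t, div_pos hk ht, by simp only [hψ]; field_simp⟩
    have h2 := integral_image_eq_integral_abs_deriv_smul measurableSet_Ioi hderiv2 hinj2
      (fun t => Real.exp (-(t - k/t)^2))
    rw [himage2] at h2
    rw [h2]
    apply setIntegral_congr_fun measurableSet_Ioi
    intro u hu
    have hu0 : (0:ℝ) < u := hu
    dsimp only
    rw [abs_neg, abs_of_pos (by positivity), smul_eq_mul]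
    congr 2
    have : k / (k/u) = u := by field_simp
    rw [this]
    ring
  rw [hsym] at h1
  linarith

lemma K_real (d : ℝ) (hd : 0 < d) :
    ∫ u in Ioi (0:ℝ), Real.exp (-u^2 - d/u^2) = Real.sqrt π / 2 * Real.exp (-(2 * Real.sqrt d)) := by
  have hk : 0 < Real.sqrt d := Real.sqrt_pos.mpr hd
  have hkey : ∀ u ∈ Ioi (0:ℝ),
      Real.exp (-u^2 - d/u^2) = Real.exp (-(2*Real.sqrt d)) * Real.exp (-(u - Real.sqrt d/u)^2) := by
    intro u hu
    have hu0 : (u:ℝ) ≠ 0 := ne_of_gt hu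
    rw [← Real.exp_add]
    congr 1
    have hsq : (Real.sqrt d)^2 = d := Real.sq_sqrt hd.le
    field_simp
    nlinarith [hsq]
  rw [setIntegral_congr_fun measurableSet_Ioi hkey, integral_const_mul, glasser_s10 _ hk]
  ring


noncomputable def Kc (d : ℂ) : ℂ := ∫ u in Ioi (0:ℝ), Complex.exp (-(u:ℂ)^2 - d / (u:ℂ)^2)

lemma Kc_norm (d : ℂ) (u : ℝ) (hu : u ≠ 0) :
    ‖Complex.exp (-(u:ℂ)^2 - d / (u:ℂ)^2)‖ = Real.exp (-u^2 - d.re/u^2) := by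
  have h1 : -(u:ℂ)^2 - d/(u:ℂ)^2 = (↑(-u^2) : ℂ) + (↑((u^2)⁻¹ : ℝ) : ℂ) * (-d) := by
    push_cast
    have : ((u:ℂ))^2 ≠ 0 := pow_ne_zero 2 (by exact_mod_cast hu)
    field_simp
    ring
  rw [Complex.norm_exp, h1]
  simp only [Complex.add_re, Complex.ofReal_re, Complex.re_ofReal_mul, Complex.neg_re]
  congr 1
  field_simp
  ring

lemma Kc_cont_integrand (d : ℂ) :
    ContinuousOn (fun u : ℝ => Complex.exp (-(u:ℂ)^2 - d / (u:ℂ)^2)) (Ioi 0) := by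
  apply Complex.continuous_exp.comp_continuousOn
  apply ContinuousOn.sub
  · exact ((Complex.continuous_ofReal.comp continuous_id).pow 2).neg.continuousOn
  · exact continuousOn_const.div
      (((Complex.continuous_ofReal.comp continuous_id).pow 2).continuousOn)
      (fun x hx => pow_ne_zero 2 (by exact_mod_cast ne_of_gt (hx : (0:ℝ) < x)))

lemma Kc_integrable {d : ℂ} (hd : 0 ≤ d.re) :
    IntegrableOn (fun u : ℝ => Complex.exp (-(u:ℂ)^2 - d / (u:ℂ)^2)) (Ioi 0) := by
  have hgauss : Integrable (fun u : ℝ => Real.exp (-u^2)) := by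
    simpa using integrable_exp_neg_mul_sq (b := 1) one_pos
  apply Integrable.mono (hgauss.restrict (s := Ioi 0))
    ((Kc_cont_integrand d).aestronglyMeasurable measurableSet_Ioi)
  filter_upwards [ae_restrict_mem measurableSet_Ioi] with u hu
  have hu0 : (0:ℝ) < u := hu
  rw [Kc_norm d u hu0.ne', Real.norm_eq_abs, _root_.abs_of_nonneg (Real.exp_nonneg _),
    Real.exp_le_exp]
  have : 0 ≤ d.re / u^2 := by positivity
  linarith

lemma Kc_real (d : ℝ) (hd : 0 < d) :
    Kc ↑d = ↑(Real.sqrt π / 2 * Real.exp (-(2 * Real.sqrt d))) := by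
  unfold Kc
  have : ∀ u ∈ Ioi (0:ℝ), Complex.exp (-(u:ℂ)^2 - ↑d / (u:ℂ)^2)
      = ((Real.exp (-u^2 - d/u^2) : ℝ) : ℂ) := by
    intro u hu
    rw [Complex.ofReal_exp]
    congr 1
    push_cast
    ring
  have hc : ContinuousOn (fun u : ℝ => Real.exp (-u^2 - d/u^2)) (Ioi 0) :=
    Real.continuous_exp.comp_continuousOn (((continuous_pow 2).neg.continuousOn).sub
      (continuousOn_const.div ((continuous_pow 2).continuousOn)
        fun x hx => pow_ne_zero 2 (ne_of_gt hx)))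
  have hgauss : Integrable (fun u : ℝ => Real.exp (-u^2)) := by
    simpa using integrable_exp_neg_mul_sq (b := 1) one_pos
  have hR : IntegrableOn (fun u : ℝ => Real.exp (-u^2 - d/u^2)) (Ioi 0) := by
    apply Integrable.mono (hgauss.restrict (s := Ioi 0))
      (hc.aestronglyMeasurable measurableSet_Ioi)
    filter_upwards [ae_restrict_mem measurableSet_Ioi] with u hu
    have hu0 : (0:ℝ) < u := hu
    rw [Real.norm_eq_abs, _root_.abs_of_nonneg (Real.exp_nonneg _), Real.norm_eq_abs,
      _root_.abs_of_nonneg (Real.exp_nonneg _), Real.exp_le_exp]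
    have : 0 ≤ d/u^2 := by positivity
    linarith
  rw [setIntegral_congr_fun measurableSet_Ioi this]
  have h2 := Complex.ofRealCLM.integral_comp_comm hR
  simp only [Complex.ofRealCLM_apply] at h2
  rw [h2, K_real d hd]

lemma Kc_hasDeriv {d₀ : ℂ} (hd : 0 < d₀.re) :
    HasDerivAt Kc (∫ u in Ioi (0:ℝ),
      Complex.exp (-(u:ℂ)^2 - d₀ / (u:ℂ)^2) * (-(1/(u:ℂ)^2))) d₀ := by
  set δ := d₀.re / 2 with hδ
  have hδ0 : 0 < δ := by positivity
  have hmeas : ∀ᶠ d in nhds d₀, AEStronglyMeasurable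
      (fun u : ℝ => Complex.exp (-(u:ℂ)^2 - d / (u:ℂ)^2)) (volume.restrict (Ioi 0)) :=
    Eventually.of_forall fun d =>
      (Kc_cont_integrand d).aestronglyMeasurable measurableSet_Ioi
  have hint : IntegrableOn (fun u : ℝ => Complex.exp (-(u:ℂ)^2 - d₀ / (u:ℂ)^2)) (Ioi 0) :=
    Kc_integrable hd.le
  have hF'cont : ContinuousOn
      (fun u : ℝ => Complex.exp (-(u:ℂ)^2 - d₀ / (u:ℂ)^2) * (-(1/(u:ℂ)^2))) (Ioi 0) := by
    apply (Kc_cont_integrand d₀).mul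
    apply ContinuousOn.neg
    exact continuousOn_const.div
      (((Complex.continuous_ofReal.comp continuous_id).pow 2).continuousOn)
      (fun x hx => pow_ne_zero 2 (by exact_mod_cast ne_of_gt (hx : (0:ℝ) < x)))
  have hgauss : Integrable (fun u : ℝ => δ⁻¹ * Real.exp (-u^2)) := by
    simpa using (integrable_exp_neg_mul_sq (b := 1) one_pos).const_mul δ⁻¹
  have key := hasDerivAt_integral_of_dominated_loc_of_deriv_le (μ := volume.restrict (Ioi 0))
    (F := fun d (u : ℝ) => Complex.exp (-(u:ℂ)^2 - d / (u:ℂ)^2))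
    (F' := fun d (u : ℝ) => Complex.exp (-(u:ℂ)^2 - d / (u:ℂ)^2) * (-(1/(u:ℂ)^2)))
    (bound := fun u => δ⁻¹ * Real.exp (-u^2)) (Metric.ball_mem_nhds d₀ hδ0) hmeas hint
    (hF'cont.aestronglyMeasurable measurableSet_Ioi) ?_ (hgauss.restrict (s := Ioi 0)) ?_
  · exact key.2
  · -- bound
    filter_upwards [ae_restrict_mem measurableSet_Ioi] with u hu d hball
    have hu0 : (0:ℝ) < u := hu
    have hdre : δ ≤ d.re := by
      have h1 : |(d - d₀).re| ≤ ‖d - d₀‖ := Complex.abs_re_le_norm _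
      have h2 : ‖d - d₀‖ < δ := by
        rw [← dist_eq_norm]; exact Metric.mem_ball.mp hball
      have := abs_le.mp h1
      simp only [Complex.sub_re] at this
      have := this.1
      linarith [h2]
    rw [norm_mul, Kc_norm d u hu0.ne']
    have hnorm2 : ‖-(1/(u:ℂ)^2)‖ = 1/u^2 := by
      rw [norm_neg]
      rw [norm_div, norm_one]
      have : ‖(u:ℂ)^2‖ = u^2 := by
        rw [norm_pow, Complex.norm_real, Real.norm_eq_abs, _root_.sq_abs]
      rw [this]
    rw [hnorm2]
    have hu2 : (0:ℝ) < u^2 := by positivity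
    have hyd : (1/u^2) * Real.exp (-(δ/u^2)) ≤ δ⁻¹ := by
      have hy : δ/u^2 * Real.exp (-(δ/u^2)) ≤ 1 := by
        rw [Real.exp_neg, mul_inv_le_iff₀ (Real.exp_pos _), one_mul]
        nlinarith [Real.add_one_le_exp (δ/u^2), div_nonneg hδ0.le hu2.le]
      have heq : (1/u^2) * Real.exp (-(δ/u^2)) = δ⁻¹ * (δ/u^2 * Real.exp (-(δ/u^2))) := by
        field_simp
      rw [heq]
      calc δ⁻¹ * (δ/u^2 * Real.exp (-(δ/u^2))) ≤ δ⁻¹ * 1 :=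
            mul_le_mul_of_nonneg_left hy (by positivity)
        _ = δ⁻¹ := mul_one _
    calc Real.exp (-u^2 - d.re/u^2) * (1/u^2) ≤ Real.exp (-u^2 - δ/u^2) * (1/u^2) := by
          apply mul_le_mul_of_nonneg_right _ (by positivity)
          rw [Real.exp_le_exp]
          have : δ/u^2 ≤ d.re/u^2 := by gcongr
          linarith
      _ = Real.exp (-u^2) * ((1/u^2) * Real.exp (-(δ/u^2))) := by
          rw [show -u^2 - δ/u^2 = -u^2 + -(δ/u^2) by ring, Real.exp_add]; ring
      _ ≤ Real.exp (-u^2) * δ⁻¹ := by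
          apply mul_le_mul_of_nonneg_left hyd (Real.exp_nonneg _)
      _ = δ⁻¹ * Real.exp (-u^2) := mul_comm _ _
  · -- differentiability
    filter_upwards [ae_restrict_mem measurableSet_Ioi] with u hu d hball
    have hu0 : (0:ℝ) < u := hu
    have hne : ((u:ℂ))^2 ≠ 0 := pow_ne_zero 2 (by exact_mod_cast hu0.ne')
    have h1 : HasDerivAt (fun d : ℂ => -(u:ℂ)^2 - d / (u:ℂ)^2) (-(1/(u:ℂ)^2)) d := by
      have := ((hasDerivAt_id d).div_const ((u:ℂ)^2)).const_sub (-(u:ℂ)^2)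
      simpa using this
    simpa [mul_comm] using h1.cexp

noncomputable def Gc (d : ℂ) : ℂ := (↑(Real.sqrt π) / 2) * Complex.exp (-2 * d ^ (1/2 : ℂ))

lemma Gc_real (d : ℝ) (hd : 0 < d) :
    Gc ↑d = ↑(Real.sqrt π / 2 * Real.exp (-(2 * Real.sqrt d))) := by
  unfold Gc
  have h1 : (↑d : ℂ) ^ (1/2 : ℂ) = ↑(Real.sqrt d) := by
    rw [show ((1/2 : ℂ)) = (((1/2 : ℝ) : ℝ) : ℂ) by norm_num, ← Complex.ofReal_cpow hd.le,
      ← Real.sqrt_eq_rpow]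
  rw [h1, Complex.ofReal_mul, Complex.ofReal_exp]
  congr 1
  · push_cast; ring
  · congr 1; push_cast; ring

lemma Gc_diffAt {d : ℂ} (hd : 0 < d.re) : DifferentiableAt ℂ Gc d := by
  apply DifferentiableAt.const_mul
  apply DifferentiableAt.cexp
  apply DifferentiableAt.const_mul
  exact differentiableAt_id.cpow (differentiableAt_const _) (Or.inl hd)

lemma KG_eq {d : ℂ} (hd : 0 < d.re) : Kc d = Gc d := by
  set U : Set ℂ := {z : ℂ | 0 < z.re} with hU
  have hopen : IsOpen U := isOpen_lt continuous_const Complex.continuous_re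
  have hK : AnalyticOnNhd ℂ Kc U := by
    apply DifferentiableOn.analyticOnNhd _ hopen
    intro z hz
    exact ((Kc_hasDeriv hz).differentiableAt).differentiableWithinAt
  have hG : AnalyticOnNhd ℂ Gc U := by
    apply DifferentiableOn.analyticOnNhd _ hopen
    intro z hz
    exact (Gc_diffAt hz).differentiableWithinAt
  have hpre : IsPreconnected U := (convex_halfSpace_re_gt 0).isPreconnected
  have h1U : (1 : ℂ) ∈ U := by simp [hU]
  have hseq : Tendsto (fun n : ℕ => ((1 + 1/((n:ℝ)+1) : ℝ) : ℂ)) atTop (𝓝[≠] (1:ℂ)) := by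
    rw [tendsto_nhdsWithin_iff]
    constructor
    · have hr : Tendsto (fun n : ℕ => (1 + 1/((n:ℝ)+1) : ℝ)) atTop (𝓝 1) := by
        have := tendsto_const_nhds (x := (1:ℝ)) (f := atTop (α := ℕ))
        have h2 := this.add tendsto_one_div_add_atTop_nhds_zero_nat
        simpa using h2
      have := hr.ofReal
      simpa using this
    · apply Eventually.of_forall
      intro n
      have h1 : (0:ℝ) < 1/((n:ℝ)+1) := by positivity
      simp only [mem_compl_iff, mem_singleton_iff]
      rw [show (1:ℂ) = ((1:ℝ):ℂ) by norm_num]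
      intro h
      rw [Complex.ofReal_inj] at h
      linarith
  have hfreq : ∃ᶠ z in nhdsWithin (1:ℂ) {(1:ℂ)}ᶜ, Kc z = Gc z := by
    apply hseq.frequently
    apply Frequently.of_forall
    intro n
    have hpos : (0:ℝ) < 1 + 1/((n:ℝ)+1) := by positivity
    rw [Kc_real _ hpos, Gc_real _ hpos]
  exact hK.eqOn_of_preconnected_of_frequently_eq hG hpre h1U hfreq hd

lemma Kc_boundary (q : ℝ) (hq : 0 < q) :
    Kc (-(q:ℂ) * Complex.I) = Gc (-(q:ℂ) * Complex.I) := by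
  set zq : ℂ := -(q:ℂ) * Complex.I with hzq
  have hzqre : zq.re = 0 := by simp [hzq]
  have hzqim : zq.im = -q := by simp [hzq]
  set dn : ℕ → ℂ := fun n => (↑(1/((n:ℝ)+1)) : ℂ) + zq with hdn
  have hdnre : ∀ n, (dn n).re = 1/((n:ℝ)+1) := by
    intro n
    simp only [hdn, Complex.add_re, Complex.ofReal_re, hzqre, add_zero]
  have hdnpos : ∀ n, 0 < (dn n).re := by
    intro n; rw [hdnre]; positivity
  have heq : ∀ n, Kc (dn n) = Gc (dn n) := fun n => KG_eq (hdnpos n)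
  have htend : Tendsto dn atTop (𝓝 zq) := by
    have hr : Tendsto (fun n : ℕ => ((1/((n:ℝ)+1) : ℝ) : ℂ)) atTop (𝓝 0) := by
      have := (tendsto_one_div_add_atTop_nhds_zero_nat).ofReal
      simpa using this
    have h3 := hr.add_const zq
    rw [zero_add] at h3
    exact h3
  have hKtend : Tendsto (fun n => Kc (dn n)) atTop (𝓝 (Kc zq)) := by
    unfold Kc
    apply tendsto_integral_of_dominated_convergence (fun u : ℝ => Real.exp (-u^2))
    · intro n
      exact (Kc_cont_integrand (dn n)).aestronglyMeasurable measurableSet_Ioi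
    · have : Integrable (fun u : ℝ => Real.exp (-u^2)) := by
        simpa using integrable_exp_neg_mul_sq (b := 1) one_pos
      exact this.restrict
    · intro n
      filter_upwards [ae_restrict_mem measurableSet_Ioi] with u hu
      have hu0 : (0:ℝ) < u := hu
      rw [Kc_norm _ u hu0.ne', Real.exp_le_exp, hdnre]
      have : 0 ≤ (1/((n:ℝ)+1)) / u^2 := by positivity
      linarith
    · filter_upwards [ae_restrict_mem measurableSet_Ioi] with u hu
      have hu0 : (0:ℝ) < u := hu
      have hcont : Continuous (fun d : ℂ => Complex.exp (-(u:ℂ)^2 - d / (u:ℂ)^2)) :=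
        Complex.continuous_exp.comp (continuous_const.sub (continuous_id.div_const _))
      exact (hcont.continuousAt.tendsto).comp htend
  have hGtend : Tendsto (fun n => Gc (dn n)) atTop (𝓝 (Gc zq)) := by
    have hslit : zq ∈ Complex.slitPlane := by
      rw [Complex.mem_slitPlane_iff]
      right; rw [hzqim]; exact neg_ne_zero.mpr hq.ne'
    have hcpow : ContinuousAt (fun d : ℂ => d ^ (1/2:ℂ)) zq :=
      continuousAt_cpow_const hslit
    have hG : ContinuousAt Gc zq := by
      apply ContinuousAt.mul continuousAt_const
      exact (Complex.continuous_exp.continuousAt).comp (continuousAt_const.mul hcpow)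
    exact (hG.tendsto).comp htend
  have hfun : (fun n => Kc (dn n)) = fun n => Gc (dn n) := funext heq
  rw [hfun] at hKtend
  exact tendsto_nhds_unique hKtend hGtend

lemma cpow_half_neg_I (q : ℝ) (hq : 0 < q) :
    (-(q:ℂ) * Complex.I) ^ (1/2:ℂ) = ↑(Real.sqrt (q/2)) * (1 - Complex.I) := by
  have hz : -(q:ℂ) * Complex.I = Complex.exp (↑(Real.log q) + ↑(-(π/2)) * Complex.I) := by
    rw [Complex.exp_add, Complex.exp_mul_I, ← Complex.ofReal_exp, Real.exp_log hq,
      ← Complex.ofReal_cos, ← Complex.ofReal_sin,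
      Real.cos_neg, Real.sin_neg, Real.cos_pi_div_two, Real.sin_pi_div_two]
    push_cast
    ring
  have hne : -(q:ℂ) * Complex.I ≠ 0 := by
    simp [hq.ne']
  rw [Complex.cpow_def_of_ne_zero hne, hz, Complex.log_exp ?_ ?_]
  · rw [show (↑(Real.log q) + ↑(-(π/2)) * Complex.I) * (1/2 : ℂ)
        = ↑(Real.log q / 2) + ↑(-(π/4)) * Complex.I by push_cast; ring]
    rw [Complex.exp_add, Complex.exp_mul_I, ← Complex.ofReal_exp,
      ← Complex.ofReal_cos, ← Complex.ofReal_sin,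
      show Real.exp (Real.log q / 2) = Real.sqrt q by
        rw [← Real.log_sqrt hq.le, Real.exp_log (Real.sqrt_pos.mpr hq)],
      Real.cos_neg, Real.sin_neg, Real.cos_pi_div_four, Real.sin_pi_div_four]
    have h2 : Real.sqrt (q/2) = Real.sqrt q * (Real.sqrt 2 / 2) := by
      rw [Real.sqrt_div hq.le]
      have h22 : Real.sqrt 2 * Real.sqrt 2 = 2 := Real.mul_self_sqrt (by norm_num)
      have h2ne : Real.sqrt 2 ≠ 0 := by positivity
      rw [show Real.sqrt q * (Real.sqrt 2/2) = Real.sqrt q * Real.sqrt 2 / 2 by ring,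
        div_eq_div_iff h2ne (by norm_num : (2:ℝ) ≠ 0), mul_assoc, h22]
    rw [h2]
    push_cast
    ring
  · simp only [Complex.add_im, Complex.ofReal_im, Complex.mul_im, Complex.I_im, Complex.I_re,
      Complex.ofReal_re, zero_add, mul_one, mul_zero, add_zero]
    linarith [Real.pi_pos]
  · simp only [Complex.add_im, Complex.ofReal_im, Complex.mul_im, Complex.I_im, Complex.I_re,
      Complex.ofReal_re, zero_add, mul_one, mul_zero, add_zero]
    linarith [Real.pi_pos]

lemma Gc_neg_I (q : ℝ) (hq : 0 < q) :
    Gc (-(q:ℂ) * Complex.I)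
      = ↑(Real.sqrt π / 2 * Real.exp (-Real.sqrt (2*q)))
        * (↑(Real.cos (Real.sqrt (2*q))) + ↑(Real.sin (Real.sqrt (2*q))) * Complex.I) := by
  unfold Gc
  rw [cpow_half_neg_I q hq]
  have h2q : Real.sqrt (2*q) = 2 * Real.sqrt (q/2) := by
    rw [show (2*q : ℝ) = 2^2 * (q/2) by ring, Real.sqrt_mul (by positivity),
      Real.sqrt_sq (by norm_num : (0:ℝ) ≤ 2)]
  rw [show (-2 : ℂ) * (↑(Real.sqrt (q/2)) * (1 - Complex.I))
      = ↑(-(2*Real.sqrt (q/2))) + ↑(2*Real.sqrt (q/2)) * Complex.I by push_cast; ring]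
  rw [Complex.exp_add, Complex.exp_mul_I, ← Complex.ofReal_exp,
    ← Complex.ofReal_cos, ← Complex.ofReal_sin, h2q]
  push_cast
  ring

lemma subst_setup (a β : ℝ) (ha : 0 < a) (hβ : 0 < β) :
    IntegrableOn (fun w : ℝ =>
        (↑(w ^ (-(3:ℝ)/2) * Real.exp (-a/w)) : ℂ) * Complex.exp (↑(β*w) * Complex.I)) (Ioi 0) ∧
    (∫ w in Ioi (0:ℝ),
        (↑(w ^ (-(3:ℝ)/2) * Real.exp (-a/w)) : ℂ) * Complex.exp (↑(β*w) * Complex.I))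
      = ↑(2 / Real.sqrt a) * Kc (-(↑(a*β)) * Complex.I) := by
  set g : ℝ → ℂ := fun w =>
    (↑(w ^ (-(3:ℝ)/2) * Real.exp (-a/w)) : ℂ) * Complex.exp (↑(β*w) * Complex.I) with hg
  set φ : ℝ → ℝ := fun u => a / u^2 with hφ
  have hderiv : ∀ u ∈ Ioi (0:ℝ), HasDerivWithinAt φ (-(2*a/u^3)) (Ioi 0) u := by
    intro u hu
    have hu0 : (0:ℝ) < u := hu
    have h := ((hasDerivAt_pow 2 u).inv (pow_ne_zero 2 hu0.ne')).const_mul a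
    have hfe : φ = fun u : ℝ => a * (u^2)⁻¹ := by
      funext v; simp [hφ, div_eq_mul_inv]
    rw [hfe]
    refine h.hasDerivWithinAt.congr_deriv ?_
    field_simp
    ring
  have hinj : InjOn φ (Ioi 0) := by
    intro u hu v hv h
    have hu0 : (0:ℝ) < u := hu
    have hv0 : (0:ℝ) < v := hv
    simp only [hφ] at h
    field_simp at h
    exact (sq_eq_sq₀ hu0.le hv0.le).mp (by linarith)
  have himage : φ '' Ioi 0 = Ioi 0 := by
    ext w
    constructor
    · rintro ⟨u, hu, rfl⟩
      have hu0 : (0:ℝ) < u := hu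
      exact div_pos ha (by positivity)
    · intro hw
      have hw0 : (0:ℝ) < w := hw
      refine ⟨Real.sqrt (a/w), Real.sqrt_pos.mpr (div_pos ha hw0), ?_⟩
      simp only [hφ]
      rw [Real.sq_sqrt (div_pos ha hw0).le]
      field_simp
  have hpt : ∀ u ∈ Ioi (0:ℝ),
      |(-(2*a/u^3))| • g (φ u)
        = ↑(2 / Real.sqrt a) * Complex.exp (-(u:ℂ)^2 - (-(↑(a*β)) * Complex.I) / (u:ℂ)^2) := by
    intro u hu
    have hu0 : (0:ℝ) < u := hu
    have habs : |(-(2*a/u^3))| = 2*a/u^3 := by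
      rw [abs_neg, _root_.abs_of_pos (by positivity)]
    have hr1 : (a/u^2) ^ (-(3:ℝ)/2) = a ^ (-(3:ℝ)/2) * u^3 := by
      have h2 : ((u:ℝ)^2) ^ (-(3:ℝ)/2) = (u^3)⁻¹ := by
        rw [← Real.rpow_natCast u 2, ← Real.rpow_mul hu0.le, ← Real.rpow_natCast u 3,
          ← Real.rpow_neg hu0.le]
        norm_num
      rw [Real.div_rpow ha.le (by positivity), h2, div_eq_mul_inv, inv_inv]
    have he1 : -a/(a/u^2) = -u^2 := by
      field_simp
      try ring
    have haa : a * a ^ (-(3:ℝ)/2) = (Real.sqrt a)⁻¹ := by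
      have e1 : a * a ^ (-(3:ℝ)/2) = a ^ ((1:ℝ) + -(3:ℝ)/2) := by
        rw [Real.rpow_add ha, Real.rpow_one]
      rw [e1, show (1:ℝ) + -(3:ℝ)/2 = -((1:ℝ)/2) by norm_num, Real.rpow_neg ha.le,
        Real.sqrt_eq_rpow]
    have hu3 : (u:ℝ)^3 ≠ 0 := by positivity
    have hconst : 2*a/u^3 * (a ^ (-(3:ℝ)/2) * u^3 * Real.exp (-u^2))
        = 2/Real.sqrt a * Real.exp (-u^2) := by
      calc 2*a/u^3 * (a ^ (-(3:ℝ)/2) * u^3 * Real.exp (-u^2))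
          = 2 * (a * a ^ (-(3:ℝ)/2)) * Real.exp (-u^2) * (u^3 / u^3) := by ring
        _ = 2 * (Real.sqrt a)⁻¹ * Real.exp (-u^2) * 1 := by rw [haa, div_self hu3]
        _ = 2 / Real.sqrt a * Real.exp (-u^2) := by ring
    have hcexp : (↑(Real.exp (-u^2)) : ℂ) * Complex.exp (↑(a*β/u^2) * Complex.I)
        = Complex.exp (-(u:ℂ)^2 - (-(↑(a*β)) * Complex.I) / (u:ℂ)^2) := by
      rw [Complex.ofReal_exp, ← Complex.exp_add]
      congr 1
      have hu2 : ((u:ℂ))^2 ≠ 0 := pow_ne_zero 2 (by exact_mod_cast hu0.ne')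
      push_cast
      field_simp
      try ring
    have hgφ : g (φ u) = ↑((a/u^2) ^ (-(3:ℝ)/2) * Real.exp (-a/(a/u^2)))
        * Complex.exp (↑(β*(a/u^2)) * Complex.I) := rfl
    rw [habs, hgφ, hr1, he1, show β*(a/u^2) = a*β/u^2 by ring]
    rw [Complex.real_smul]
    calc ((2*a/u^3 : ℝ) : ℂ) * (((a ^ (-(3:ℝ)/2) * u^3 * Real.exp (-u^2) : ℝ) : ℂ)
            * Complex.exp (((a*β/u^2 : ℝ) : ℂ) * Complex.I))
        = ((2*a/u^3 * (a ^ (-(3:ℝ)/2) * u^3 * Real.exp (-u^2)) : ℝ) : ℂ)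
            * Complex.exp (((a*β/u^2 : ℝ) : ℂ) * Complex.I) := by push_cast; ring
      _ = ((2/Real.sqrt a * Real.exp (-u^2) : ℝ) : ℂ)
            * Complex.exp (((a*β/u^2 : ℝ) : ℂ) * Complex.I) := by
          rw [hconst]
      _ = ((2/Real.sqrt a : ℝ) : ℂ) * (((Real.exp (-u^2) : ℝ) : ℂ)
            * Complex.exp (((a*β/u^2 : ℝ) : ℂ) * Complex.I)) := by push_cast; ring
      _ = ((2/Real.sqrt a : ℝ) : ℂ)
            * Complex.exp (-(u:ℂ)^2 - (-((a*β : ℝ) : ℂ) * Complex.I) / (u:ℂ)^2) := by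
          rw [hcexp]
  have hre0 : 0 ≤ (-(↑(a*β):ℂ) * Complex.I).re := by simp
  have hKint := Kc_integrable hre0
  constructor
  · have hiff := integrableOn_image_iff_integrableOn_abs_deriv_smul measurableSet_Ioi
      hderiv hinj g
    rw [himage] at hiff
    apply hiff.mpr
    exact IntegrableOn.congr_fun (Integrable.const_mul hKint _)
      (fun u hu => (hpt u hu).symm) measurableSet_Ioi
  · have himg := integral_image_eq_integral_abs_deriv_smul measurableSet_Ioi hderiv hinj g
    rw [himage] at himg
    rw [himg, setIntegral_congr_fun measurableSet_Ioi hpt, integral_const_mul]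
    rfl

/-- Real part of the half-line Fourier transform of `f(w) = w^(-3/2) e^(-a/w)`:
for `a > 0` and `β > 0`, `∫_0^∞ w^(-3/2) e^(-a/w) cos(βw) dw` converges and
equals `√(π/a) · e^(-√(2aβ)) · cos(√(2aβ))`. -/
theorem integral_rpow_neg_three_halves_exp_cos (a β : ℝ)
    (ha : 0 < a) (hβ : 0 < β) :
    IntegrableOn
      (fun w : ℝ => w ^ (-(3 : ℝ) / 2) * Real.exp (-a / w) * Real.cos (β * w))
      (Ioi (0 : ℝ)) ∧
    ∫ w in Ioi (0 : ℝ),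
        w ^ (-(3 : ℝ) / 2) * Real.exp (-a / w) * Real.cos (β * w)
      = Real.sqrt (π / a) * Real.exp (-Real.sqrt (2 * a * β))
          * Real.cos (Real.sqrt (2 * a * β)) := by
  have hq : 0 < a * β := mul_pos ha hβ
  obtain ⟨hFint, hFval⟩ := subst_setup a β ha hβ
  set F : ℝ → ℂ := fun w =>
    (↑(w ^ (-(3:ℝ)/2) * Real.exp (-a/w)) : ℂ) * Complex.exp (↑(β*w) * Complex.I) with hF
  have hre : ∀ w : ℝ, (F w).re = w ^ (-(3:ℝ)/2) * Real.exp (-a/w) * Real.cos (β*w) := by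
    intro w
    rw [hF]
    rw [Complex.re_ofReal_mul, Complex.exp_ofReal_mul_I_re]
  have hKG : Kc (-(↑(a*β)) * Complex.I)
      = ↑(Real.sqrt π/2 * Real.exp (-Real.sqrt (2*(a*β))))
        * (↑(Real.cos (Real.sqrt (2*(a*β)))) + ↑(Real.sin (Real.sqrt (2*(a*β)))) * Complex.I) := by
    rw [Kc_boundary (a*β) hq, Gc_neg_I (a*β) hq]
  constructor
  · have h1 : IntegrableOn (fun w => (F w).re) (Ioi 0) := by
      have h2 := hFint.re
      simpa [RCLike.re_to_complex, IntegrableOn] using h2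
    exact IntegrableOn.congr_fun h1 (fun w _ => hre w) measurableSet_Ioi
  · have h2 : (∫ w in Ioi (0:ℝ), w ^ (-(3:ℝ)/2) * Real.exp (-a/w) * Real.cos (β*w))
        = (∫ w in Ioi (0:ℝ), F w).re := by
      have h2a := integral_re hFint
      simp only [RCLike.re_to_complex] at h2a
      rw [← h2a]
      exact setIntegral_congr_fun measurableSet_Ioi fun w _ => (hre w).symm
    rw [h2, hFval, hKG, Complex.re_ofReal_mul, Complex.re_ofReal_mul]
    have h3 : ((↑(Real.cos (Real.sqrt (2*(a*β)))) : ℂ)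
        + ↑(Real.sin (Real.sqrt (2*(a*β)))) * Complex.I).re = Real.cos (Real.sqrt (2*(a*β))) := by
      simp only [Complex.add_re, Complex.mul_re, Complex.I_re, Complex.I_im,
        Complex.ofReal_re, Complex.ofReal_im]
      ring
    rw [h3]
    have hsq : Real.sqrt (π/a) = Real.sqrt π / Real.sqrt a := Real.sqrt_div pi_pos.le a
    rw [show (2*(a*β) : ℝ) = 2*a*β by ring, hsq]
    have hsa : Real.sqrt a ≠ 0 := by positivity
    field_simp
end

section
/- For all a > 0 and β > 0, the improper integral ∫_0^∞ w^{-3/2} e^{-a/w} sin(β·w) dw converges and equals √(π/a) · e^{-√(2aβ)} · sin(√(2aβ)). (This is the imaginary part of the half-line Fourier transform of f(w) = w^{-3/2} e^{-a/w} at frequency β.) -/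
open Real MeasureTheory Set
open Filter

lemma expsq_int : IntegrableOn (fun v : ℝ => Real.exp (-v ^ 2)) (Ioi 0) := by
  have := (integrable_exp_neg_mul_sq one_pos).integrableOn (s := Ioi 0)
  simpa using this

lemma glasser_base_int {p : ℝ} (hp : 0 ≤ p) :
    IntegrableOn (fun v : ℝ => Real.exp (-v ^ 2 - p / v ^ 2)) (Ioi 0) := by
  apply Integrable.mono' expsq_int
  · apply ContinuousOn.aestronglyMeasurable ?_ measurableSet_Ioi
    exact (((continuousOn_id.pow 2).neg).sub
      (continuousOn_const.div (continuousOn_id.pow 2)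
        (fun v hv => pow_ne_zero _ (ne_of_gt hv)))).rexp
  · filter_upwards [ae_restrict_mem measurableSet_Ioi] with v hv
    rw [Real.norm_eq_abs, abs_of_nonneg (Real.exp_nonneg _)]
    apply Real.exp_le_exp.2
    have : 0 ≤ p / v ^ 2 := div_nonneg hp (sq_nonneg v)
    linarith

noncomputable def glE (q : ℝ) : ℝ → ℝ := fun v => Real.exp (-(v - q / v) ^ 2)

lemma glE_eq {q : ℝ} (hq : 0 < q) {v : ℝ} (hv : v ∈ Ioi (0:ℝ)) :
    glE q v = Real.exp (2 * q) * Real.exp (-v ^ 2 - q ^ 2 / v ^ 2) := by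
  rw [glE, ← Real.exp_add]
  congr 1
  have hv0 : (v:ℝ) ≠ 0 := ne_of_gt hv
  field_simp
  ring

lemma glE_int {q : ℝ} (hq : 0 < q) : IntegrableOn (glE q) (Ioi 0) := by
  refine (IntegrableOn.congr_fun (((glasser_base_int (p := q ^ 2) (by positivity)).const_mul
    (Real.exp (2 * q)))) (fun v hv => (glE_eq hq hv).symm) measurableSet_Ioi)

lemma glE_symm {q : ℝ} (hq : 0 < q) {v : ℝ} (hv : v ∈ Ioi (0:ℝ)) : glE q (q / v) = glE q v := by
  have hv0 : (v:ℝ) ≠ 0 := ne_of_gt hv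
  have hqq : q / (q / v) = v := by field_simp
  rw [glE, glE, hqq]
  ring_nf

lemma glasser_real {p : ℝ} (hp : 0 < p) :
    ∫ v in Ioi (0:ℝ), Real.exp (-v ^ 2 - p / v ^ 2)
      = Real.sqrt π / 2 * Real.exp (-2 * Real.sqrt p) := by
  obtain ⟨q, hq, rfl⟩ : ∃ q : ℝ, 0 < q ∧ q ^ 2 = p :=
    ⟨Real.sqrt p, Real.sqrt_pos.2 hp, Real.sq_sqrt hp.le⟩
  rw [Real.sqrt_sq hq.le]
  -- substitution v ↦ q / v
  have hφderiv : ∀ v ∈ Ioi (0:ℝ), HasDerivWithinAt (fun v => q / v) (-q / v ^ 2) (Ioi 0) v :=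
    fun v hv => by
      have h := ((hasDerivAt_const v q).div (hasDerivAt_id v) (ne_of_gt hv)).hasDerivWithinAt
        (s := Ioi (0:ℝ))
      refine h.congr_deriv ?_
      simp only [id_eq]
      ring
  have hφinj : InjOn (fun v => q / v) (Ioi 0) := by
    intro x hx y hy h
    have hx0 : x ≠ 0 := ne_of_gt hx
    have hy0 : y ≠ 0 := ne_of_gt hy
    have h2 : q / x = q / y := h
    have h' : x⁻¹ = y⁻¹ := by
      rwa [div_eq_mul_inv, div_eq_mul_inv, mul_right_inj' (ne_of_gt hq)] at h2
    exact inv_injective h' 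
  have hφimg : (fun v => q / v) '' (Ioi 0) = Ioi (0:ℝ) := by
    ext u
    constructor
    · rintro ⟨v, hv, rfl⟩; exact div_pos hq hv
    · intro hu; exact ⟨q / u, div_pos hq hu, by field_simp⟩
  have hsub1 : ∫ v in Ioi (0:ℝ), glE q v = ∫ v in Ioi (0:ℝ), (q / v ^ 2) * glE q v := by
    conv_lhs => rw [← hφimg]
    rw [integral_image_eq_integral_abs_deriv_smul measurableSet_Ioi hφderiv hφinj (glE q)]
    refine setIntegral_congr_fun measurableSet_Ioi (fun v hv => ?_)
    rw [smul_eq_mul, glE_symm hq hv, abs_div, abs_neg, abs_of_pos hq, abs_of_pos (pow_pos hv 2)]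
  have hint2 : IntegrableOn (fun v => (q / v ^ 2) * glE q v) (Ioi 0) := by
    have := (integrableOn_image_iff_integrableOn_abs_deriv_smul measurableSet_Ioi
      hφderiv hφinj (glE q)).1 (by rw [hφimg]; exact glE_int hq)
    refine this.congr_fun (fun v hv => ?_) measurableSet_Ioi
    dsimp only
    rw [smul_eq_mul, glE_symm hq hv, abs_div, abs_neg, abs_of_pos hq, abs_of_pos (pow_pos hv 2)]
  -- substitution ψ v = v - q / v
  have hψderiv : ∀ v ∈ Ioi (0:ℝ), HasDerivWithinAt (fun v : ℝ => v - q / v)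
      (1 + q / v ^ 2) (Ioi 0) v := by
    intro v hv
    have h := ((hasDerivAt_id v).sub
      ((hasDerivAt_const v q).div (hasDerivAt_id v) (ne_of_gt hv))).hasDerivWithinAt
      (s := Ioi (0:ℝ))
    refine h.congr_deriv ?_
    simp only [id_eq]
    ring
  have hψinj : InjOn (fun v : ℝ => v - q / v) (Ioi 0) := by
    apply StrictMonoOn.injOn
    intro x hx y hy hxy
    have : q / y < q / x := div_lt_div_of_pos_left hq hx hxy
    simp only
    linarith
  have hψimg : (fun v : ℝ => v - q / v) '' (Ioi 0) = univ := by
    refine eq_univ_of_forall (fun u => ?_)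
    have hs2 : Real.sqrt (u ^ 2 + 4 * q) ^ 2 = u ^ 2 + 4 * q := Real.sq_sqrt (by positivity)
    set s := Real.sqrt (u ^ 2 + 4 * q)
    have hs_pos : |u| < s := by
      rw [← Real.sqrt_sq_eq_abs]
      exact Real.sqrt_lt_sqrt (sq_nonneg u) (by linarith)
    have hv_pos : 0 < (u + s) / 2 := by
      have := neg_abs_le u
      linarith [abs_nonneg u, hs_pos]
    refine ⟨(u + s) / 2, hv_pos, ?_⟩
    have h0 : u + s ≠ 0 := by
      intro h; rw [h] at hv_pos; simp at hv_pos
    show (u + s) / 2 - q / ((u + s) / 2) = u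
    field_simp
    ring
    nlinarith [hs2]
  have hsub2 : ∫ u : ℝ, Real.exp (-u ^ 2) = ∫ v in Ioi (0:ℝ), (1 + q / v ^ 2) * glE q v := by
    conv_lhs => rw [← Measure.restrict_univ (μ := volume), ← hψimg]
    rw [integral_image_eq_integral_abs_deriv_smul measurableSet_Ioi hψderiv hψinj
        (fun u => Real.exp (-u ^ 2))]
    refine setIntegral_congr_fun measurableSet_Ioi (fun v hv => ?_)
    rw [smul_eq_mul, abs_of_pos (by positivity : (0:ℝ) < 1 + q / v ^ 2)]
    rfl
  have hgauss : ∫ u : ℝ, Real.exp (-u ^ 2) = Real.sqrt π := by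
    simpa using integral_gaussian 1
  have hsplit : ∫ v in Ioi (0:ℝ), (1 + q / v ^ 2) * glE q v
      = (∫ v in Ioi (0:ℝ), glE q v) + ∫ v in Ioi (0:ℝ), (q / v ^ 2) * glE q v := by
    rw [← integral_add (glE_int hq) hint2]
    exact setIntegral_congr_fun measurableSet_Ioi (fun v hv => by ring)
  have hEval : ∫ v in Ioi (0:ℝ), glE q v = Real.sqrt π / 2 := by
    have h := hgauss.symm.trans (hsub2.trans hsplit)
    rw [← hsub1] at h
    linarith
  have hfin : ∫ v in Ioi (0:ℝ), Real.exp (-v ^ 2 - q ^ 2 / v ^ 2)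
      = Real.exp (-(2 * q)) * ∫ v in Ioi (0:ℝ), glE q v := by
    rw [← integral_const_mul]
    refine setIntegral_congr_fun measurableSet_Ioi (fun v hv => ?_)
    rw [glE_eq hq hv, ← mul_assoc, ← Real.exp_add]
    simp
  rw [hfin, hEval]
  ring_nf


noncomputable def glA (z : ℂ) : ℂ :=
  ∫ v in Ioi (0:ℝ), Complex.exp (-(v:ℂ) ^ 2 - z / (v:ℂ) ^ 2)

noncomputable def glG (z : ℂ) : ℂ :=
  ((Real.sqrt π / 2 : ℝ) : ℂ) * Complex.exp (-2 * z ^ (1/2 : ℂ))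

lemma glF_norm (z : ℂ) {v : ℝ} (hv : 0 < v) :
    ‖Complex.exp (-(v:ℂ) ^ 2 - z / (v:ℂ) ^ 2)‖ = Real.exp (-v ^ 2 - z.re / v ^ 2) := by
  rw [Complex.norm_exp]
  congr 1
  have hv2 : ((v:ℂ))^2 = ((v^2 : ℝ) : ℂ) := by push_cast; ring
  rw [hv2, Complex.div_ofReal]
  simp [Complex.sub_re, Complex.neg_re]
  norm_cast

lemma glF_contOn (z : ℂ) :
    ContinuousOn (fun v : ℝ => Complex.exp (-(v:ℂ) ^ 2 - z / (v:ℂ) ^ 2)) (Ioi 0) := by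
  apply ContinuousOn.cexp
  apply ContinuousOn.sub
  · exact ((Complex.continuous_ofReal.continuousOn).pow 2).neg
  · exact continuousOn_const.div ((Complex.continuous_ofReal.continuousOn).pow 2)
      (fun v hv => pow_ne_zero 2 (Complex.ofReal_ne_zero.mpr (ne_of_gt hv)))

lemma glA_integrable {z : ℂ} (hz : 0 ≤ z.re) :
    IntegrableOn (fun v : ℝ => Complex.exp (-(v:ℂ) ^ 2 - z / (v:ℂ) ^ 2)) (Ioi 0) := by
  apply Integrable.mono' expsq_int
  · exact (glF_contOn z).aestronglyMeasurable measurableSet_Ioi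
  · filter_upwards [ae_restrict_mem measurableSet_Ioi] with v hv
    rw [glF_norm z hv]
    apply Real.exp_le_exp.2
    have : 0 ≤ z.re / v ^ 2 := div_nonneg hz (sq_nonneg v)
    linarith

lemma one_div_sq_exp_le {r t : ℝ} (hr : 0 < r) (ht : 0 < t) :
    t * Real.exp (-(r * t)) ≤ 1 / r := by
  have h1 : r * t ≤ Real.exp (r * t) := by linarith [Real.add_one_le_exp (r * t)]
  have hpos : (0:ℝ) < Real.exp (r * t) := Real.exp_pos _
  have hrt : (0:ℝ) < r * t := by positivity
  rw [Real.exp_neg, div_eq_mul_inv, one_mul]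
  calc t * (Real.exp (r * t))⁻¹ ≤ t * (r * t)⁻¹ := by
        apply mul_le_mul_of_nonneg_left ?_ ht.le
        exact inv_anti₀ hrt h1
    _ = r⁻¹ := by field_simp

lemma glA_hasDeriv {z₀ : ℂ} (hz₀ : 0 < z₀.re) :
    HasDerivAt glA
      (∫ v in Ioi (0:ℝ), Complex.exp (-(v:ℂ) ^ 2 - z₀ / (v:ℂ) ^ 2) * (-(1 / (v:ℂ) ^ 2))) z₀ := by
  set r := z₀.re / 2 with hr_def
  have hr : 0 < r := by positivity
  have key := hasDerivAt_integral_of_dominated_loc_of_deriv_le (μ := volume.restrict (Ioi 0))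
    (F := fun z (v : ℝ) => Complex.exp (-(v:ℂ) ^ 2 - z / (v:ℂ) ^ 2))
    (F' := fun z (v : ℝ) => Complex.exp (-(v:ℂ) ^ 2 - z / (v:ℂ) ^ 2) * (-(1 / (v:ℂ) ^ 2)))
    (x₀ := z₀) (bound := fun v => (1 / r) * Real.exp (-v ^ 2))
    (s := Metric.ball z₀ r) (Metric.ball_mem_nhds z₀ hr)
    (Eventually.of_forall fun z => (glF_contOn z).aestronglyMeasurable measurableSet_Ioi)
    (glA_integrable hz₀.le)
    ?meas' ?bound ?bint ?diff
  · exact key.2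
  case meas' =>
    apply ContinuousOn.aestronglyMeasurable ?_ measurableSet_Ioi
    exact (glF_contOn z₀).mul
      ((continuousOn_const.div ((Complex.continuous_ofReal.continuousOn).pow 2)
        (fun v hv => pow_ne_zero 2 (Complex.ofReal_ne_zero.mpr (ne_of_gt hv)))).neg)
  case bound =>
    filter_upwards [ae_restrict_mem measurableSet_Ioi] with v hv
    intro z hz
    have hzre : r < z.re := by
      have h1 : |z.re - z₀.re| ≤ ‖z - z₀‖ := by
        simpa using Complex.abs_re_le_norm (z - z₀)
      have h2 : ‖z - z₀‖ < r := by
        rwa [Metric.mem_ball, Complex.dist_eq] at hz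
      have := abs_lt.1 (h1.trans_lt h2)
      simp only [hr_def] at this ⊢
      linarith [this.1]
    rw [norm_mul, glF_norm z hv]
    have hnorm2 : ‖-(1 / (v:ℂ) ^ 2)‖ = 1 / v ^ 2 := by
      rw [norm_neg, norm_div, norm_one]
      rw [norm_pow, Complex.norm_real, Real.norm_eq_abs, abs_of_pos hv]
    rw [hnorm2]
    have hv2 : 0 < v ^ 2 := pow_pos hv 2
    have hmono : Real.exp (-v ^ 2 - z.re / v ^ 2) ≤ Real.exp (-v ^ 2 - r * (1 / v ^ 2)) := by
      apply Real.exp_le_exp.2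
      rw [mul_one_div]
      have : r / v ^ 2 ≤ z.re / v ^ 2 := by gcongr
      linarith
    calc Real.exp (-v ^ 2 - z.re / v ^ 2) * (1 / v ^ 2)
        ≤ Real.exp (-v ^ 2 - r * (1 / v ^ 2)) * (1 / v ^ 2) :=
          mul_le_mul_of_nonneg_right hmono (by positivity)
      _ = Real.exp (-v ^ 2) * ((1 / v ^ 2) * Real.exp (-(r * (1 / v ^ 2)))) := by
          rw [sub_eq_add_neg, Real.exp_add]; ring
      _ ≤ Real.exp (-v ^ 2) * (1 / r) :=
          mul_le_mul_of_nonneg_left (one_div_sq_exp_le hr (by positivity)) (Real.exp_nonneg _)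
      _ = 1 / r * Real.exp (-v ^ 2) := by ring
  case bint =>
    exact expsq_int.const_mul _
  case diff =>
    filter_upwards [ae_restrict_mem measurableSet_Ioi] with v hv
    intro z hz
    have hv0 : ((v:ℂ)) ^ 2 ≠ 0 := pow_ne_zero 2 (Complex.ofReal_ne_zero.mpr (ne_of_gt hv))
    have h1 : HasDerivAt (fun z : ℂ => -(v:ℂ) ^ 2 - z / (v:ℂ) ^ 2) (-(1 / (v:ℂ) ^ 2)) z := by
      have := ((hasDerivAt_id z).div_const ((v:ℂ) ^ 2)).neg.const_add (-(v:ℂ) ^ 2)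
      simp only [id_eq, Pi.neg_apply] at this
      exact this.congr_of_eventuallyEq (Eventually.of_forall fun w => by ring)
    have := h1.cexp
    simpa using this

lemma ofReal_integral_eq (f : ℝ → ℝ) (μ : Measure ℝ) :
    ∫ x, ((f x : ℝ) : ℂ) ∂μ = ((∫ x, f x ∂μ : ℝ) : ℂ) := integral_ofReal

lemma glU_open : IsOpen {z : ℂ | 0 < z.re} := isOpen_lt continuous_const Complex.continuous_re

lemma glA_eq_glG_on : EqOn glA glG {z : ℂ | 0 < z.re} := by
  have hA : AnalyticOnNhd ℂ glA {z : ℂ | 0 < z.re} := by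
    apply DifferentiableOn.analyticOnNhd ?_ glU_open
    intro z hz
    exact ((glA_hasDeriv hz).differentiableAt).differentiableWithinAt
  have hG : AnalyticOnNhd ℂ glG {z : ℂ | 0 < z.re} := by
    apply DifferentiableOn.analyticOnNhd ?_ glU_open
    intro z hz
    apply DifferentiableAt.differentiableWithinAt
    apply DifferentiableAt.const_mul
    apply DifferentiableAt.cexp
    exact (differentiableAt_id.cpow (differentiableAt_const _)
      (Complex.mem_slitPlane_iff.2 (Or.inl hz))).const_mul _
  have hpre : IsPreconnected {z : ℂ | 0 < z.re} := (convex_halfSpace_re_gt 0).isPreconnected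
  have hreal : ∀ p : ℝ, 0 < p → glA p = glG p := by
    intro p hp
    have h1 : glA p = ((Real.sqrt π / 2 * Real.exp (-2 * Real.sqrt p) : ℝ) : ℂ) := by
      have heq : ∫ v in Ioi (0:ℝ), Complex.exp (-(v:ℂ) ^ 2 - (p:ℂ) / (v:ℂ) ^ 2)
          = ∫ v in Ioi (0:ℝ), ((Real.exp (-v ^ 2 - p / v ^ 2) : ℝ) : ℂ) := by
        refine setIntegral_congr_fun measurableSet_Ioi (fun v hv => ?_)
        rw [Complex.ofReal_exp]
        congr 1
        push_cast
        ring
      rw [glA, heq, ofReal_integral_eq, glasser_real hp]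
    have h2 : ((p:ℂ)) ^ (1/2 : ℂ) = ((Real.sqrt p : ℝ) : ℂ) := by
      rw [show (1/2 : ℂ) = ((1/2 : ℝ) : ℂ) by norm_num, ← Complex.ofReal_cpow hp.le,
        ← Real.sqrt_eq_rpow]
    rw [h1, glG, h2]
    rw [show (-2 : ℂ) * ((Real.sqrt p : ℝ) : ℂ) = ((-2 * Real.sqrt p : ℝ) : ℂ) by push_cast; ring,
      ← Complex.ofReal_exp, ← Complex.ofReal_mul]
  -- identity theorem
  have h1mem : (1 : ℂ) ∈ {z : ℂ | 0 < z.re} := by simp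
  apply hA.eqOn_of_preconnected_of_frequently_eq hG hpre h1mem
  have htend : Tendsto (fun n : ℕ => (1 + (1 / (n + 1) : ℝ) : ℂ)) atTop (nhdsWithin 1 {(1:ℂ)}ᶜ) := by
    rw [tendsto_nhdsWithin_iff]
    constructor
    · have : Tendsto (fun n : ℕ => (1 / (n + 1) : ℝ)) atTop (nhds 0) :=
        tendsto_one_div_add_atTop_nhds_zero_nat
      have h2 := (Complex.continuous_ofReal.tendsto 0).comp this
      have h3 := h2.const_add (1 : ℂ)
      simpa using h3
    · filter_upwards with n
      simp only [mem_compl_iff, mem_singleton_iff]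
      intro h
      have : (1 + (1 / (n + 1) : ℝ) : ℂ).re = 1 := by rw [h]; simp
      simp only [Complex.add_re, Complex.one_re, Complex.ofReal_re] at this
      have hn : (0:ℝ) < 1 / (n + 1) := by positivity
      linarith
  apply htend.frequently
  apply Frequently.of_forall
  intro n
  have hn : (0:ℝ) < 1 + 1 / (n + 1) := by positivity
  have hcast : (1 + (1 / (n + 1) : ℝ) : ℂ) = ((1 + 1 / (n + 1) : ℝ) : ℂ) := by push_cast; ring
  rw [hcast]
  exact hreal _ hn

lemma glA_boundary {c : ℝ} (hc : 0 < c) :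
    glA (-(c:ℂ) * Complex.I) = glG (-(c:ℂ) * Complex.I) := by
  set zl : ℂ := -(c:ℂ) * Complex.I with hzl
  have hzlre : zl.re = 0 := by simp [hzl]
  have hzlim : zl.im = -c := by simp [hzl]
  set zseq : ℕ → ℂ := fun n => ((1 / (n + 1) : ℝ) : ℂ) + zl with hzseq
  have hzre : ∀ n, (zseq n).re = 1 / (n + 1) := by
    intro n
    rw [hzseq]
    simp only [Complex.add_re, Complex.ofReal_re, hzlre, add_zero]
  have hzpos : ∀ n, 0 < (zseq n).re := by
    intro n; rw [hzre]; positivity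
  have htend : Filter.Tendsto zseq atTop (nhds zl) := by
    have h0 : Filter.Tendsto (fun n : ℕ => (1 / (n + 1) : ℝ)) atTop (nhds 0) :=
      tendsto_one_div_add_atTop_nhds_zero_nat
    have h1 : Filter.Tendsto (fun n : ℕ => ((1 / (n + 1) : ℝ) : ℂ)) atTop (nhds ((0:ℝ):ℂ)) :=
      (Complex.continuous_ofReal.tendsto 0).comp h0
    have h2 := h1.add_const zl
    rw [hzseq]
    simpa only [Complex.ofReal_zero, zero_add] using h2
  -- limit of glA along the sequence
  have hAlim : Filter.Tendsto (fun n => glA (zseq n)) atTop (nhds (glA zl)) := by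
    apply tendsto_integral_of_dominated_convergence (fun v => Real.exp (-v ^ 2))
    · exact fun n => (glF_contOn (zseq n)).aestronglyMeasurable measurableSet_Ioi
    · exact expsq_int
    · intro n
      filter_upwards [ae_restrict_mem measurableSet_Ioi] with v hv
      rw [glF_norm _ hv]
      apply Real.exp_le_exp.2
      have : 0 ≤ (zseq n).re / v ^ 2 := div_nonneg (hzpos n).le (sq_nonneg v)
      linarith
    · filter_upwards [ae_restrict_mem measurableSet_Ioi] with v hv
      have hcont : Continuous (fun z : ℂ => Complex.exp (-(v:ℂ) ^ 2 - z / (v:ℂ) ^ 2)) := by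
        apply Continuous.cexp
        exact continuous_const.sub (continuous_id.div_const _)
      exact (hcont.tendsto zl).comp htend
  -- limit of glG along the sequence
  have hGlim : Filter.Tendsto (fun n => glG (zseq n)) atTop (nhds (glG zl)) := by
    have hslit : zl ∈ Complex.slitPlane := by
      apply Complex.mem_slitPlane_iff.2
      right
      rw [hzlim]
      exact neg_ne_zero.2 (ne_of_gt hc)
    have hcont : ContinuousAt glG zl := by
      unfold glG
      exact ((((continuousAt_id.cpow continuousAt_const hslit).const_mul
        (-2 : ℂ)).cexp).const_mul _)
    exact hcont.tendsto.comp htend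
  have heq : ∀ n, glA (zseq n) = glG (zseq n) := fun n => glA_eq_glG_on (hzpos n)
  exact tendsto_nhds_unique (by simpa only [heq] using hAlim) hGlim

lemma gl_sqrt_two_c {c : ℝ} (hc : 0 < c) : 2 * Real.sqrt (c / 2) = Real.sqrt (2 * c) := by
  rw [show (2 * c : ℝ) = 2 ^ 2 * (c / 2) by ring, Real.sqrt_mul (by positivity),
    Real.sqrt_sq (by norm_num : (0:ℝ) ≤ 2)]

lemma gl_cpow_eval {c : ℝ} (hc : 0 < c) :
    (-(c:ℂ) * Complex.I) ^ (1/2 : ℂ)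
      = ((Real.sqrt (c / 2) : ℝ) : ℂ) * (1 - Complex.I) := by
  have hne : -(c:ℂ) * Complex.I ≠ 0 := by
    simp [Complex.ext_iff, ne_of_gt hc]
  rw [Complex.cpow_def_of_ne_zero hne]
  rw [show -(c:ℂ) * Complex.I = (c:ℂ) * (-Complex.I) by ring]
  rw [Complex.log_ofReal_mul hc (by simp), Complex.log_neg_I]
  have hsplit : ((Real.log c : ℝ) + -(↑π / 2) * Complex.I) * (1/2 : ℂ)
      = ((Real.log c * (1/2) : ℝ) : ℂ) + ((-(π/4) : ℝ) : ℂ) * Complex.I := by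
    push_cast
    ring
  rw [hsplit, Complex.exp_add]
  have h1 : Complex.exp ((Real.log c * (1/2) : ℝ) : ℂ) = ((Real.sqrt c : ℝ) : ℂ) := by
    rw [← Complex.ofReal_exp]
    congr 1
    rw [Real.sqrt_eq_rpow, Real.rpow_def_of_pos hc]
  have h2 : Complex.exp (((-(π/4) : ℝ) : ℂ) * Complex.I)
      = ((Real.cos (π/4) : ℝ) : ℂ) - ((Real.sin (π/4) : ℝ) : ℂ) * Complex.I := by
    rw [Complex.exp_mul_I]
    rw [← Complex.ofReal_cos, ← Complex.ofReal_sin]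
    rw [Real.cos_neg, Real.sin_neg]
    push_cast
    ring
  rw [h1, h2, Real.cos_pi_div_four, Real.sin_pi_div_four]
  have h22 : Real.sqrt 2 * Real.sqrt 2 = 2 := Real.mul_self_sqrt (by norm_num)
  have h3 : Real.sqrt c * (Real.sqrt 2 / 2) = Real.sqrt (c / 2) := by
    rw [Real.sqrt_div hc.le 2, eq_div_iff (ne_of_gt (Real.sqrt_pos.2 two_pos))]
    nlinarith [Real.sqrt_nonneg c, Real.sqrt_nonneg 2]
  push_cast
  rw [← h3]
  push_cast
  ring

lemma glG_im {c : ℝ} (hc : 0 < c) :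
    (glG (-(c:ℂ) * Complex.I)).im
      = Real.sqrt π / 2 * (Real.exp (-Real.sqrt (2*c)) * Real.sin (Real.sqrt (2*c))) := by
  rw [glG, gl_cpow_eval hc]
  have harg : (-2 : ℂ) * (((Real.sqrt (c/2) : ℝ) : ℂ) * (1 - Complex.I))
      = ((-Real.sqrt (2*c) : ℝ) : ℂ) + ((Real.sqrt (2*c) : ℝ) : ℂ) * Complex.I := by
    rw [← gl_sqrt_two_c hc]
    push_cast
    ring
  rw [harg]
  simp [Complex.mul_im, Complex.exp_im, Complex.add_re, Complex.add_im, Complex.ofReal_re,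
    Complex.ofReal_im, Complex.mul_re, Complex.I_re, Complex.I_im]

lemma gl_exp_sin_eq {c : ℝ} (hc : 0 < c) {v : ℝ} (hv : v ∈ Ioi (0:ℝ)) :
    (Complex.exp (-(v:ℂ) ^ 2 - (-(c:ℂ) * Complex.I) / (v:ℂ) ^ 2)).im
      = Real.exp (-v ^ 2) * Real.sin (c / v ^ 2) := by
  have hv0 : (v:ℝ) ≠ 0 := ne_of_gt hv
  have hv2 : ((v:ℂ)) ^ 2 = ((v ^ 2 : ℝ) : ℂ) := by push_cast; ring
  have harg : -(v:ℂ) ^ 2 - (-(c:ℂ) * Complex.I) / (v:ℂ) ^ 2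
      = ((-v ^ 2 : ℝ) : ℂ) + ((c / v ^ 2 : ℝ) : ℂ) * Complex.I := by
    rw [hv2]
    push_cast
    ring
  rw [harg]
  simp only [Complex.exp_im, Complex.add_re, Complex.add_im, Complex.ofReal_re,
    Complex.ofReal_im, Complex.mul_re, Complex.mul_im, Complex.I_re, Complex.I_im,
    mul_zero, mul_one, zero_mul, sub_zero, add_zero, zero_add, zero_sub, neg_zero]

lemma gl_S_eq {c : ℝ} (hc : 0 < c) :
    ∫ v in Ioi (0:ℝ), Real.exp (-v ^ 2) * Real.sin (c / v ^ 2)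
      = Real.sqrt π / 2 * (Real.exp (-Real.sqrt (2*c)) * Real.sin (Real.sqrt (2*c))) := by
  have hre : (-(c:ℂ) * Complex.I).re = 0 := by simp
  have hint := glA_integrable (z := -(c:ℂ) * Complex.I) (by rw [hre])
  calc ∫ v in Ioi (0:ℝ), Real.exp (-v ^ 2) * Real.sin (c / v ^ 2)
      = ∫ v in Ioi (0:ℝ),
          (Complex.exp (-(v:ℂ) ^ 2 - (-(c:ℂ) * Complex.I) / (v:ℂ) ^ 2)).im :=
        (setIntegral_congr_fun measurableSet_Ioi (fun v hv => gl_exp_sin_eq hc hv)).symm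
    _ = (glA (-(c:ℂ) * Complex.I)).im := by rw [glA]; exact integral_im hint
    _ = (glG (-(c:ℂ) * Complex.I)).im := by rw [glA_boundary hc]
    _ = _ := glG_im hc

lemma gl_pointwise {a β : ℝ} (ha : 0 < a) (hβ : 0 < β) {v : ℝ} (hv : v ∈ Ioi (0:ℝ)) :
    |(-(2 * a) / v ^ 3)| • ((a / v ^ 2) ^ (-(3:ℝ) / 2) * Real.exp (-a / (a / v ^ 2))
        * Real.sin (β * (a / v ^ 2)))
      = (2 / Real.sqrt a) * (Real.exp (-v ^ 2) * Real.sin (a * β / v ^ 2)) := by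
  have hv0 : (0:ℝ) < v := hv
  have hvne : v ≠ 0 := ne_of_gt hv0
  have habs : |(-(2 * a) / v ^ 3)| = 2 * a / v ^ 3 := by
    rw [abs_div, abs_neg, abs_of_pos (by positivity : (0:ℝ) < 2 * a),
      abs_of_pos (by positivity : (0:ℝ) < v ^ 3)]
  have hrpow : (a / v ^ 2) ^ (-(3:ℝ) / 2) = v ^ 3 / (a * Real.sqrt a) := by
    have hav : (0:ℝ) < a / v ^ 2 := by positivity
    rw [show (-(3:ℝ) / 2) = -((3:ℝ)/2) by ring, Real.rpow_neg hav.le,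
      Real.div_rpow ha.le (sq_nonneg v)]
    have e3 : ((v:ℝ) ^ 2) ^ ((3:ℝ)/2) = v ^ 3 := by
      rw [← Real.rpow_natCast v 2, ← Real.rpow_mul hv0.le]
      norm_num
    have e4 : a ^ ((3:ℝ)/2) = a * Real.sqrt a := by
      rw [show ((3:ℝ)/2) = 1 + (1/2 : ℝ) by norm_num, Real.rpow_add ha, Real.rpow_one,
        Real.sqrt_eq_rpow]
    rw [e3, e4, inv_div]
  have hexp : Real.exp (-a / (a / v ^ 2)) = Real.exp (-v ^ 2) := by
    congr 1
    field_simp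
  have hsin : Real.sin (β * (a / v ^ 2)) = Real.sin (a * β / v ^ 2) := by
    congr 1
    ring
  rw [smul_eq_mul, habs, hrpow, hexp, hsin]
  have hsa : Real.sqrt a > 0 := Real.sqrt_pos.2 ha
  field_simp

/-- Imaginary part of the half-line Fourier transform of
`f(w) = w^(-3/2) e^(-a/w)`: for `a > 0` and `β > 0`,
`∫_0^∞ w^(-3/2) e^(-a/w) sin(βw) dw` converges and equals
`√(π/a) · e^(-√(2aβ)) · sin(√(2aβ))`. -/
theorem integral_rpow_neg_three_halves_exp_sin (a β : ℝ)
    (ha : 0 < a) (hβ : 0 < β) :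
    IntegrableOn
      (fun w : ℝ => w ^ (-(3 : ℝ) / 2) * Real.exp (-a / w) * Real.sin (β * w))
      (Ioi (0 : ℝ)) ∧
    ∫ w in Ioi (0 : ℝ),
        w ^ (-(3 : ℝ) / 2) * Real.exp (-a / w) * Real.sin (β * w)
      = Real.sqrt (π / a) * Real.exp (-Real.sqrt (2 * a * β))
          * Real.sin (Real.sqrt (2 * a * β)) := by
  have hc : 0 < a * β := mul_pos ha hβ
  -- substitution φ v = a / v^2
  have hφderiv : ∀ v ∈ Ioi (0:ℝ),
      HasDerivWithinAt (fun v : ℝ => a / v ^ 2) (-(2 * a) / v ^ 3) (Ioi 0) v := by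
    intro v hv
    have hvne : (v:ℝ) ≠ 0 := ne_of_gt hv
    have h := ((hasDerivAt_const v a).div (hasDerivAt_pow 2 v)
      (pow_ne_zero 2 hvne)).hasDerivWithinAt (s := Ioi (0:ℝ))
    refine h.congr_deriv ?_
    field_simp
    ring
  have hφinj : InjOn (fun v : ℝ => a / v ^ 2) (Ioi 0) := by
    apply StrictAntiOn.injOn
    intro x hx y hy hxy
    exact div_lt_div_of_pos_left ha (pow_pos (mem_Ioi.1 hx) 2)
      (pow_lt_pow_left₀ hxy (mem_Ioi.1 hx).le (by norm_num))
  have hφimg : (fun v : ℝ => a / v ^ 2) '' (Ioi 0) = Ioi (0:ℝ) := by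
    ext u
    constructor
    · rintro ⟨v, hv, rfl⟩
      exact div_pos ha (pow_pos hv 2)
    · intro hu
      have hu0 : (0:ℝ) < u := hu
      refine ⟨Real.sqrt (a / u), Real.sqrt_pos.2 (by positivity), ?_⟩
      have : Real.sqrt (a / u) ^ 2 = a / u := Real.sq_sqrt (by positivity)
      simp only [this]
      field_simp
  set f : ℝ → ℝ := fun w => w ^ (-(3 : ℝ) / 2) * Real.exp (-a / w) * Real.sin (β * w) with hf
  -- the transformed integrand
  have hcongr : ∀ v ∈ Ioi (0:ℝ), |(-(2 * a) / v ^ 3)| • f (a / v ^ 2)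
      = (2 / Real.sqrt a) * (Real.exp (-v ^ 2) * Real.sin (a * β / v ^ 2)) :=
    fun v hv => gl_pointwise ha hβ hv
  -- integrability of the transformed integrand
  have hint2 : IntegrableOn
      (fun v => (2 / Real.sqrt a) * (Real.exp (-v ^ 2) * Real.sin (a * β / v ^ 2)))
      (Ioi 0) := by
    apply Integrable.const_mul
    apply Integrable.mono' expsq_int
    · apply ContinuousOn.aestronglyMeasurable ?_ measurableSet_Ioi
      apply ContinuousOn.mul
      · exact ((continuousOn_id.pow 2).neg).rexp
      · exact Real.continuous_sin.comp_continuousOn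
          (continuousOn_const.div (continuousOn_id.pow 2)
            (fun v hv => pow_ne_zero 2 (ne_of_gt hv)))
    · filter_upwards [ae_restrict_mem measurableSet_Ioi] with v hv
      rw [Real.norm_eq_abs, abs_mul, abs_of_nonneg (Real.exp_nonneg _)]
      calc Real.exp (-v ^ 2) * |Real.sin (a * β / v ^ 2)|
          ≤ Real.exp (-v ^ 2) * 1 :=
            mul_le_mul_of_nonneg_left (Real.abs_sin_le_one _) (Real.exp_nonneg _)
        _ = Real.exp (-v ^ 2) := mul_one _
  have hintf : IntegrableOn f (Ioi 0) := by
    rw [← hφimg]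
    rw [integrableOn_image_iff_integrableOn_abs_deriv_smul measurableSet_Ioi hφderiv hφinj f]
    exact hint2.congr_fun (fun v hv => (hcongr v hv).symm) measurableSet_Ioi
  constructor
  · exact hintf
  have hval : ∫ w in Ioi (0:ℝ), f w
      = (2 / Real.sqrt a) * ∫ v in Ioi (0:ℝ), Real.exp (-v ^ 2) * Real.sin (a * β / v ^ 2) := by
    conv_lhs => rw [← hφimg]
    rw [integral_image_eq_integral_abs_deriv_smul measurableSet_Ioi hφderiv hφinj f]
    rw [← integral_const_mul]
    exact setIntegral_congr_fun measurableSet_Ioi hcongr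
  have hS : ∫ v in Ioi (0:ℝ), Real.exp (-v ^ 2) * Real.sin (a * β / v ^ 2)
      = Real.sqrt π / 2 * (Real.exp (-Real.sqrt (2 * (a * β)))
          * Real.sin (Real.sqrt (2 * (a * β)))) := by
    have h := gl_S_eq hc
    convert h using 4 <;> ring
  rw [hval, hS]
  have h2 : Real.sqrt (π / a) = Real.sqrt π / Real.sqrt a := Real.sqrt_div pi_pos.le a
  have h3 : (2 * (a * β)) = 2 * a * β := by ring
  rw [h3] at *
  rw [h2]
  have hsa : (0:ℝ) < Real.sqrt a := Real.sqrt_pos.2 ha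
  field_simp
end

section
/- For all B, ω, ω_m, t ∈ ℝ, the phase-modulated signal satisfies the expansion cos( ω·t + B·sin(ω_m·t) ) = Σ_{k ∈ ℤ} J_k(B) · cos( (ω + k·ω_m)·t ), where J_k(B) = (1/π) ∫_0^π cos( k·θ − B·sin(θ) ) dθ is the Bessel function of the first kind of integer order k, and the family ( J_k(B)·cos((ω + k·ω_m)t) )_{k ∈ ℤ} has sum cos(ωt + B sin(ω_m t)) (the series converges). -/
open Real MeasureTheory Filter Topology intervalIntegral

/-- The Bessel function of the first kind of integer order `k`, given by the
integral representation `J_k(x) = (1/π) ∫_0^π cos(kθ − x·sin θ) dθ`. -/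
noncomputable def besselJ (k : ℤ) (x : ℝ) : ℝ :=
  (1 / π) * ∫ θ in (0 : ℝ)..π, Real.cos (k * θ - x * Real.sin θ)

namespace JacobiAngerAux

open Complex (I)

lemma norm_fourier {T : ℝ} (n : ℤ) (x : AddCircle T) : ‖fourier n x‖ = 1 := by
  rw [fourier_apply]; exact Circle.norm_coe _

noncomputable def g (B θ : ℝ) : ℂ := Complex.exp (I * B * Real.sin θ)

lemma g_cont (B : ℝ) : Continuous (g B) := by
  apply Complex.continuous_exp.comp
  fun_prop

lemma g_norm (B θ : ℝ) : ‖g B θ‖ = 1 := by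
  rw [g, Complex.norm_exp]
  simp [Complex.mul_re]

lemma g_periodic (B : ℝ) : Function.Periodic (g B) (2 * π) := by
  intro θ; simp [g, Real.sin_add_two_pi]

lemma g_hasDerivAt (B θ : ℝ) :
    HasDerivAt (g B) (g B θ * (I * B * Real.cos θ)) θ := by
  have h : HasDerivAt (fun θ : ℝ => I * B * (Real.sin θ : ℂ)) (I * B * Real.cos θ) θ :=
    ((Real.hasDerivAt_sin θ).ofReal_comp).const_mul (I * B)
  exact h.cexp

noncomputable def g1 (B θ : ℝ) : ℂ := g B θ * (I * B * Real.cos θ)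

noncomputable def g2 (B θ : ℝ) : ℂ :=
  g B θ * ((I * B * Real.cos θ) ^ 2 - I * B * Real.sin θ)

lemma g1_cont (B : ℝ) : Continuous (g1 B) := by
  unfold g1; have := g_cont B; fun_prop

lemma g2_cont (B : ℝ) : Continuous (g2 B) := by
  unfold g2; have := g_cont B; fun_prop

lemma g1_hasDerivAt (B θ : ℝ) : HasDerivAt (g1 B) (g2 B θ) θ := by
  have h2 : HasDerivAt (fun θ : ℝ => I * B * (Real.cos θ : ℂ)) (I * B * (-Real.sin θ)) θ := by
    have := ((Real.hasDerivAt_cos θ).ofReal_comp).const_mul (I * (B:ℂ))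
    simpa using this
  have := (g_hasDerivAt B θ).mul h2
  convert this using 1
  · rfl
  · rfl
  simp only [g2]
  push_cast
  ring

lemma g2_bound (B θ : ℝ) : ‖g2 B θ‖ ≤ B ^ 2 + |B| := by
  rw [g2, norm_mul, g_norm, one_mul]
  refine le_trans (norm_sub_le _ _) ?_
  have h1 : ‖(I * B * (Real.cos θ:ℂ)) ^ 2‖ ≤ B ^ 2 := by
    rw [norm_pow, norm_mul, norm_mul, Complex.norm_I, one_mul, Complex.norm_real,
      Complex.norm_real, Real.norm_eq_abs, Real.norm_eq_abs]
    have hc : |B| * |Real.cos θ| ≤ |B| :=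
      mul_le_of_le_one_right (abs_nonneg B) (Real.abs_cos_le_one θ)
    calc (|B| * |Real.cos θ|) ^ 2 ≤ |B| ^ 2 := by
          exact pow_le_pow_left₀ (by positivity) hc 2
      _ = B ^ 2 := sq_abs B
  have h2 : ‖I * (B:ℂ) * (Real.sin θ:ℂ)‖ ≤ |B| := by
    rw [norm_mul, norm_mul, Complex.norm_I, one_mul, Complex.norm_real,
      Complex.norm_real, Real.norm_eq_abs, Real.norm_eq_abs]
    exact mul_le_of_le_one_right (abs_nonneg B) (Real.abs_sin_le_one θ)
  exact add_le_add h1 h2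

lemma two_pi_pos' : (0:ℝ) < 2 * π := by positivity

/-- generic sup-norm bound for Fourier coefficients on an interval -/
lemma coeffOn_bound {f : ℝ → ℂ} {M : ℝ} (hM : ∀ θ, ‖f θ‖ ≤ M) (n : ℤ) :
    ‖fourierCoeffOn two_pi_pos' f n‖ ≤ M := by
  have hM0 : 0 ≤ M := le_trans (norm_nonneg _) (hM 0)
  rw [fourierCoeffOn_eq_integral, norm_smul]
  refine le_trans (mul_le_mul_of_nonneg_left
    (intervalIntegral.norm_integral_le_of_norm_le_const (C := M) ?_) (norm_nonneg _)) ?_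
  · intro x hx
    rw [norm_smul, norm_fourier, one_mul]
    exact hM x
  · rw [sub_zero, abs_of_pos two_pi_pos', Real.norm_eq_abs,
      abs_of_pos (by positivity : (0:ℝ) < 1/(2*π))]
    have h : (1/(2*π)) * (M * (2*π)) = M := by
      field_simp
    exact le_of_eq h


lemma g_endpoints (B : ℝ) : g B (2*π) = g B 0 := by
  simp [g, Real.sin_two_pi]

lemma g1_endpoints (B : ℝ) : g1 B (2*π) = g1 B 0 := by
  simp [g1, g, Real.sin_two_pi, Real.cos_two_pi]

lemma coeff_step {f f' : ℝ → ℂ} (hder : ∀ θ, HasDerivAt f (f' θ) θ)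
    (hcont : Continuous f') (hend : f (2*π) = f 0) {n : ℤ} (hn : n ≠ 0) :
    fourierCoeffOn two_pi_pos' f n = 1/(I*n) * fourierCoeffOn two_pi_pos' f' n := by
  rw [fourierCoeffOn_of_hasDerivAt two_pi_pos' hn (fun x _ => hder x)
    ((hcont.intervalIntegrable) 0 (2*π))]
  rw [hend, sub_self, mul_zero, zero_sub]
  have hI : I ≠ 0 := Complex.I_ne_zero
  have hn' : ((n:ℤ):ℂ) ≠ 0 := by exact_mod_cast (Int.cast_ne_zero (α := ℂ)).mpr hn
  have hπ : ((π:ℝ):ℂ) ≠ 0 := by exact_mod_cast Complex.ofReal_ne_zero.mpr Real.pi_ne_zero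
  field_simp
  push_cast
  ring

lemma norm_inv_In (n : ℤ) (hn : n ≠ 0) : ‖(1/(I*(n:ℂ)) : ℂ)‖ = 1/|(n:ℝ)| := by
  rw [norm_div, norm_one, norm_mul, Complex.norm_I, one_mul]
  norm_cast

lemma coeff_decay (B : ℝ) {n : ℤ} (hn : n ≠ 0) :
    ‖fourierCoeffOn two_pi_pos' (g B) n‖ ≤ (B^2 + |B|) / (n:ℝ)^2 := by
  have h1 := coeff_step (f' := g1 B) (fun θ => g_hasDerivAt B θ) (g1_cont B) (g_endpoints B) hn
  have h2 := coeff_step (fun θ => g1_hasDerivAt B θ) (g2_cont B) (g1_endpoints B) hn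
  rw [h1, h2, norm_mul, norm_mul, norm_inv_In n hn]
  have hb := coeffOn_bound (fun θ => g2_bound B θ) n
  have hn0 : (0:ℝ) < |(n:ℝ)| := by
    simp only [abs_pos, Int.cast_ne_zero]; exact hn
  have hsq : (0:ℝ) < (n:ℝ)^2 := by positivity
  have key : ∀ x : ℝ, 1/|(n:ℝ)| * (1/|(n:ℝ)| * x) = x / (n:ℝ)^2 := by
    intro x
    rw [← sq_abs]
    field_simp [hn0.ne']
  rw [key]
  gcongr

lemma coeff_summable (B : ℝ) :
    Summable (fun n : ℤ => fourierCoeffOn two_pi_pos' (g B) n) := by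
  have hs : Summable (fun n : ℤ => (B^2 + |B|) * (1/((n:ℝ))^2)) :=
    (Real.summable_one_div_int_pow.mpr one_lt_two).mul_left _
  refine Summable.of_norm_bounded_eventually hs ?_
  refine ((Set.finite_singleton (0:ℤ)).eventually_cofinite_notMem).mono ?_
  intro n hn
  simp only [Set.mem_singleton_iff] at hn
  rw [mul_one_div]
  exact coeff_decay B hn

lemma sin_twopi_sub (x : ℝ) : Real.sin (2*π - x) = -Real.sin x := by
  simp [Real.sin_sub, Real.sin_two_pi, Real.cos_two_pi]

lemma int_reflect (u : ℝ → ℝ) : (∫ x in (0:ℝ)..π, u (2*π - x)) = ∫ x in π..2*π, u x := by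
  rw [intervalIntegral.integral_comp_sub_left u (2*π)]
  norm_num
  rw [show 2*π - π = π by ring]

lemma cos_integral (B : ℝ) (n : ℤ) :
    (∫ x in (0:ℝ)..2*π, Real.cos (B*Real.sin x - n*x))
      = 2 * ∫ x in (0:ℝ)..π, Real.cos (n*x - B*Real.sin x) := by
  have hcont : Continuous fun x : ℝ => Real.cos (B*Real.sin x - n*x) := by fun_prop
  have hi1 : IntervalIntegrable _ volume 0 π := hcont.intervalIntegrable 0 π
  have hi2 : IntervalIntegrable _ volume π (2*π) := hcont.intervalIntegrable π (2*π)
  have hsplit := intervalIntegral.integral_add_adjacent_intervals hi1 hi2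
  rw [← hsplit]
  have e1 : (∫ x in (0:ℝ)..π, Real.cos (B*Real.sin x - n*x))
      = ∫ x in (0:ℝ)..π, Real.cos (n*x - B*Real.sin x) := by
    apply intervalIntegral.integral_congr
    intro x _
    dsimp only
    rw [← neg_sub, Real.cos_neg]
  have e2 : (∫ x in π..2*π, Real.cos (B*Real.sin x - n*x))
      = ∫ x in (0:ℝ)..π, Real.cos (n*x - B*Real.sin x) := by
    rw [← int_reflect]
    apply intervalIntegral.integral_congr
    intro x _
    have harg : B*Real.sin (2*π - x) - n*(2*π - x)
        = (n*x - B*Real.sin x) + ((-n : ℤ) : ℝ)*(2*π) := by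
      rw [sin_twopi_sub]; push_cast; ring
    dsimp only
    rw [harg, Real.cos_add_int_mul_two_pi]
  rw [e1, e2, two_mul]

lemma sin_integral (B : ℝ) (n : ℤ) :
    (∫ x in (0:ℝ)..2*π, Real.sin (B*Real.sin x - n*x)) = 0 := by
  have hcont : Continuous fun x : ℝ => Real.sin (B*Real.sin x - n*x) := by fun_prop
  have hi1 : IntervalIntegrable _ volume 0 π := hcont.intervalIntegrable 0 π
  have hi2 : IntervalIntegrable _ volume π (2*π) := hcont.intervalIntegrable π (2*π)
  have hsplit := intervalIntegral.integral_add_adjacent_intervals hi1 hi2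
  rw [← hsplit]
  have e2 : (∫ x in π..2*π, Real.sin (B*Real.sin x - n*x))
      = -∫ x in (0:ℝ)..π, Real.sin (B*Real.sin x - n*x) := by
    rw [← int_reflect, ← intervalIntegral.integral_neg]
    apply intervalIntegral.integral_congr
    intro x _
    have harg : B*Real.sin (2*π - x) - n*(2*π - x)
        = (-(B*Real.sin x - n*x)) + ((-n : ℤ) : ℝ)*(2*π) := by
      rw [sin_twopi_sub]; push_cast; ring
    dsimp only
    rw [harg, Real.sin_add_int_mul_two_pi, Real.sin_neg]
  rw [e2]
  ring

lemma coeff_eq_besselJ (B : ℝ) (n : ℤ) :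
    fourierCoeffOn two_pi_pos' (g B) n = (besselJ n B : ℂ) := by
  rw [fourierCoeffOn_eq_integral]
  have hπ : ((2*π - 0 : ℝ) : ℂ) ≠ 0 := by
    norm_num [Real.pi_ne_zero]
  have hint : Set.EqOn (fun x : ℝ => fourier (-n) (x : AddCircle (2*π - 0)) • g B x)
      (fun x : ℝ => ((Real.cos (B*Real.sin x - n*x) : ℝ) : ℂ)
        + ((Real.sin (B*Real.sin x - n*x) : ℝ) : ℂ) * Complex.I)
      (Set.uIcc 0 (2*π)) := by
    intro x _
    dsimp only
    rw [fourier_coe_apply, smul_eq_mul, g, ← Complex.exp_add]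
    rw [show (2 * ↑π * Complex.I * ↑(-n) * ↑x / ↑(2*π - 0) + Complex.I * ↑B * ↑(Real.sin x) : ℂ)
        = ((B*Real.sin x - n*x : ℝ) : ℂ) * Complex.I by
          have hπ' : ((π:ℝ):ℂ) ≠ 0 := Complex.ofReal_ne_zero.mpr Real.pi_ne_zero
          field_simp
          push_cast
          ring]
    rw [Complex.exp_mul_I, ← Complex.ofReal_cos, ← Complex.ofReal_sin]
  rw [intervalIntegral.integral_congr hint]
  have hc : Continuous fun x : ℝ => ((Real.cos (B*Real.sin x - n*x) : ℝ) : ℂ) := by fun_prop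
  have hs : Continuous fun x : ℝ => ((Real.sin (B*Real.sin x - n*x) : ℝ) : ℂ) * Complex.I := by
    fun_prop
  rw [intervalIntegral.integral_add ((hc.intervalIntegrable 0 (2*π) : _))
    ((hs.intervalIntegrable 0 (2*π) : _))]
  rw [intervalIntegral.integral_mul_const, intervalIntegral.integral_ofReal,
    intervalIntegral.integral_ofReal, cos_integral, sin_integral]
  rw [besselJ]
  push_cast
  rw [Complex.real_smul]
  have : ((π:ℝ):ℂ) ≠ 0 := Complex.ofReal_ne_zero.mpr Real.pi_ne_zero
  push_cast
  field_simp
  ring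

instance : Fact ((0:ℝ) < 2*π) := ⟨two_pi_pos'⟩

noncomputable def F (B : ℝ) : C(AddCircle (2*π), ℂ) :=
  ⟨(g_periodic B).lift, continuous_coinduced_dom.mpr (g_cont B)⟩

lemma F_coe (B x : ℝ) : F B (x : AddCircle (2*π)) = g B x := (g_periodic B).lift_coe x

lemma fourierCoeff_F (B : ℝ) (n : ℤ) :
    fourierCoeff (⇑(F B)) n = fourierCoeffOn two_pi_pos' (g B) n := by
  rw [fourierCoeff_eq_intervalIntegral _ n 0, fourierCoeffOn_eq_integral]
  simp only [zero_add, sub_zero, fourier_coe_apply, smul_eq_mul, F_coe]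

lemma fourier_eval (k : ℤ) (x : ℝ) :
    (fourier k ((x:ℝ) : AddCircle (2*π)) : ℂ) = Complex.exp (((k*x : ℝ) : ℂ) * Complex.I) := by
  rw [fourier_coe_apply]
  congr 1
  have hπ' : ((π:ℝ):ℂ) ≠ 0 := Complex.ofReal_ne_zero.mpr Real.pi_ne_zero
  push_cast
  field_simp

lemma hasSum_g (B x : ℝ) :
    HasSum (fun k : ℤ => ((besselJ k B : ℝ) : ℂ) * Complex.exp (((k*x : ℝ) : ℂ) * Complex.I))
      (g B x) := by
  have hsum : Summable (fourierCoeff (⇑(F B))) := by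
    have : fourierCoeff (⇑(F B)) = fun n => fourierCoeffOn two_pi_pos' (g B) n :=
      funext (fourierCoeff_F B)
    rw [this]
    exact coeff_summable B
  have h := has_pointwise_sum_fourier_series_of_summable hsum ((x:ℝ) : AddCircle (2*π))
  rw [F_coe] at h
  have e : (fun k : ℤ => fourierCoeff (⇑(F B)) k • fourier k ((x:ℝ) : AddCircle (2*π)))
      = fun k : ℤ => ((besselJ k B : ℝ) : ℂ) * Complex.exp (((k*x : ℝ) : ℂ) * Complex.I) := by
    funext k
    rw [fourierCoeff_F, coeff_eq_besselJ, smul_eq_mul, fourier_eval]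
  rw [e] at h
  exact h

end JacobiAngerAux

/-- Expansion of a phase-modulated signal into its harmonics:
`cos(ωt + B sin(ω_m t)) = Σ_{k ∈ ℤ} J_k(B) cos((ω + k·ω_m)t)`, where the
family `(J_k(B) cos((ω + k·ω_m)t))_{k ∈ ℤ}` is summable with this sum. -/
theorem phase_modulation_bessel_expansion (B ω ωm t : ℝ) :
    HasSum (fun k : ℤ => besselJ k B * Real.cos ((ω + k * ωm) * t))
      (Real.cos (ω * t + B * Real.sin (ωm * t))) := by
  have h := (JacobiAngerAux.hasSum_g B (ωm * t)).mul_right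
    (Complex.exp (((ω*t : ℝ) : ℂ) * Complex.I))
  have h3 := Complex.hasSum_re h
  have e1 : (fun k : ℤ => ((((besselJ k B : ℝ) : ℂ) * Complex.exp (((k*(ωm*t) : ℝ) : ℂ) * Complex.I))
      * Complex.exp (((ω*t : ℝ) : ℂ) * Complex.I)).re)
      = fun k : ℤ => besselJ k B * Real.cos ((ω + k * ωm) * t) := by
    funext k
    rw [mul_assoc, ← Complex.exp_add, ← add_mul, ← Complex.ofReal_add]
    rw [show (k*(ωm*t) + ω*t : ℝ) = (ω + k*ωm)*t by ring]
    rw [Complex.re_ofReal_mul, Complex.exp_ofReal_mul_I_re]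
  have e2 : ((JacobiAngerAux.g B (ωm*t)) * Complex.exp (((ω*t : ℝ) : ℂ) * Complex.I)).re
      = Real.cos (ω * t + B * Real.sin (ωm * t)) := by
    rw [JacobiAngerAux.g]
    rw [show (Complex.I * (B:ℂ) * ((Real.sin (ωm*t) : ℝ) : ℂ))
        = ((B * Real.sin (ωm*t) : ℝ) : ℂ) * Complex.I by push_cast; ring]
    rw [← Complex.exp_add, ← add_mul, ← Complex.ofReal_add]
    rw [show (B * Real.sin (ωm*t) + ω*t : ℝ) = ω*t + B*Real.sin (ωm*t) by ring]
    exact Complex.exp_ofReal_mul_I_re _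
  rw [e1, e2] at h3
  exact h3
end
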